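/- arXiv:2302.10556 — 10 statements merged into one kernel-verified Lean document; each statement's English description precedes it below -/
import Mathlib

section
/- Let F be a finite field with q elements and let C be a linear code in F^n (an F-linear subspace of the space of functions Fin n → F). Then the covering radius of C is at most the external distance of C, i.e., ρ(C) ≤ s(C), where s(C) is the number of distinct nonzero Hamming weights occurring among codewords of the dual code C^⊥. -/
open scoped BigOperators

/-- The distance from a vector `v` to a code `C`. -/
noncomputable def distToCode {F : Type*} [DecidableEq F] {n : ℕ}
    (C : Set (Fin n → F)) (v : Fin n → F) : ℕ :=
  sInf {d | ∃ c ∈ C, hammingDist v c = d}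

/-- The covering radius of a code `C`: the maximum over all vectors of the
distance to the code. -/
noncomputable def coveringRadius {F : Type*} [DecidableEq F] {n : ℕ}
    (C : Set (Fin n → F)) : ℕ :=
  sSup {r | ∃ v : Fin n → F, distToCode C v = r}

/-- The dual code of a linear code `C`. -/
def dualCode {F : Type*} [Field F] {n : ℕ} (C : Submodule F (Fin n → F)) :
    Set (Fin n → F) :=
  {y | ∀ x ∈ C, ∑ i, x i * y i = 0}

/-- The external distance of a linear code `C`: the number of distinct nonzero
Hamming weights occurring among codewords of the dual code. -/
noncomputable def externalDistance {F : Type*} [Field F] [DecidableEq F] {n : ℕ}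
    (C : Submodule F (Fin n → F)) : ℕ :=
  Set.ncard {w : ℕ | w ≠ 0 ∧ ∃ y ∈ dualCode C, hammingNorm y = w}


open Finset

lemma addChar_sum_eq_prod {A M : Type*} [AddCommMonoid A] [CommMonoid M] (ψ : AddChar A M)
    {ι : Type*} (s : Finset ι) (g : ι → A) : ψ (∑ i ∈ s, g i) = ∏ i ∈ s, ψ (g i) := by
  induction s using Finset.cons_induction with
  | empty => simp
  | cons a s ha ih => rw [Finset.sum_cons, Finset.prod_cons, AddChar.map_add_eq_mul, ih]

lemma mono_support {F : Type*} [Field F] [Fintype F] [DecidableEq F] {n : ℕ}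
    (ψ : AddChar F ℂ) (hψ : ψ.IsPrimitive) {z : Fin n → F} {k : ℕ} (hk : k < hammingNorm z) :
    ∑ u : Fin n → F, (hammingNorm u : ℂ) ^ k * ψ (∑ i, u i * z i) = 0 := by
  classical
  have hwt : ∀ u : Fin n → F, (hammingNorm u : ℂ) = ∑ i, (if u i = 0 then (0:ℂ) else 1) := by
    intro u
    rw [hammingNorm, Finset.card_filter]
    push_cast
    refine Finset.sum_congr rfl fun i _ => ?_
    by_cases h : u i = 0 <;> simp [h]
  simp_rw [hwt, Fintype.sum_pow, Finset.sum_mul]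
  rw [Finset.sum_comm]
  apply Finset.sum_eq_zero
  intro t _
  set S : Finset (Fin n) := Finset.image t Finset.univ with hS
  have hScard : S.card ≤ k := le_trans Finset.card_image_le (by simp)
  have hprod : ∀ u : Fin n → F, (∏ j : Fin k, (if u (t j) = 0 then (0:ℂ) else 1))
      = ∏ i ∈ S, (if u i = 0 then (0:ℂ) else 1) := by
    intro u
    by_cases h : ∃ j, u (t j) = 0
    · obtain ⟨j, hj⟩ := h
      rw [Finset.prod_eq_zero (Finset.mem_univ j) (by simp [hj]),
        Finset.prod_eq_zero (Finset.mem_image_of_mem t (Finset.mem_univ j)) (by simp [hj])]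
    · push_neg at h
      rw [Finset.prod_eq_one (fun j _ => by simp [h j]), Finset.prod_eq_one]
      intro i hi
      obtain ⟨j, _, rfl⟩ := Finset.mem_image.mp hi
      simp [h j]
  have hcomb : ∀ u : Fin n → F, (∏ i ∈ S, (if u i = 0 then (0:ℂ) else 1)) * ψ (∑ i, u i * z i)
      = ∏ i, ((if i ∈ S then (if u i = 0 then (0:ℂ) else 1) else 1) * ψ (u i * z i)) := by
    intro u
    rw [Finset.prod_mul_distrib, addChar_sum_eq_prod]
    congr 1
    rw [Finset.prod_ite_mem Finset.univ S, Finset.univ_inter]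
  simp_rw [hprod, hcomb]
  rw [show (∑ x : Fin n → F, ∏ i : Fin n, (if i ∈ S then (if x i = 0 then (0:ℂ) else 1) else 1) * ψ (x i * z i))
      = ∏ i : Fin n, ∑ a : F, (if i ∈ S then (if a = 0 then (0:ℂ) else 1) else 1) * ψ (a * z i) from
    (Fintype.prod_sum fun i a => (if i ∈ S then (if a = 0 then (0:ℂ) else 1) else 1) * ψ (a * z i)).symm]
  obtain ⟨i₀, hi₀z, hi₀S⟩ : ∃ i₀, z i₀ ≠ 0 ∧ i₀ ∉ S := by
    have hn : ¬ (Finset.filter (fun i => z i ≠ 0) Finset.univ ⊆ S) := by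
      intro hsub
      have := Finset.card_le_card hsub
      rw [show (Finset.filter (fun i => z i ≠ 0) Finset.univ).card = hammingNorm z from rfl] at this
      omega
    obtain ⟨i₀, h1, h2⟩ := Finset.not_subset.mp hn
    exact ⟨i₀, by simpa using h1, h2⟩
  apply Finset.prod_eq_zero (Finset.mem_univ i₀)
  have hs := AddChar.sum_mulShift (z i₀) hψ
  rw [if_neg hi₀z] at hs
  simp only [if_neg hi₀S, one_mul]
  exact_mod_cast hs

lemma poly_support {F : Type*} [Field F] [Fintype F] [DecidableEq F] {n : ℕ}
    (ψ : AddChar F ℂ) (hψ : ψ.IsPrimitive) (f : Polynomial ℂ) {z : Fin n → F}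
    (hz : f.natDegree < hammingNorm z) :
    ∑ u : Fin n → F, f.eval (hammingNorm u : ℂ) * ψ (∑ i, u i * z i) = 0 := by
  simp_rw [Polynomial.eval_eq_sum_range, Finset.sum_mul]
  rw [Finset.sum_comm]
  apply Finset.sum_eq_zero
  intro k hk
  have hk' : k < hammingNorm z := by
    have := Finset.mem_range.mp hk; omega
  simp_rw [mul_assoc, ← Finset.mul_sum]
  rw [mono_support ψ hψ hk', mul_zero]

lemma sum_over_code {F : Type*} [Field F] [Fintype F] [DecidableEq F] {n : ℕ}
    (ψ : AddChar F ℂ) (hψ : ψ.IsPrimitive) (C : Submodule F (Fin n → F))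
    (CF : Finset (Fin n → F)) (hCF : ∀ c, c ∈ CF ↔ c ∈ C)
    {u : Fin n → F} (hu : u ∉ dualCode C) :
    ∑ c ∈ CF, ψ (∑ i, u i * c i) = 0 := by
  obtain ⟨x, hxC, hb⟩ : ∃ x ∈ C, ¬ (∑ i, x i * u i = 0) := by
    simpa [dualCode] using hu
  set b : F := ∑ i, x i * u i with hbdef
  obtain ⟨a, ha⟩ := AddChar.ne_one_iff.mp (hψ hb)
  rw [AddChar.mulShift_apply] at ha
  set S : ℂ := ∑ c ∈ CF, ψ (∑ i, u i * c i) with hSdef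
  have h1 : ∑ c ∈ CF, ψ (∑ i, u i * (c + a • x) i) = S := by
    refine Finset.sum_equiv (Equiv.addRight (a • x)) (fun c => ?_) (fun c hc => rfl)
    simp only [Equiv.coe_addRight, hCF]
    exact (Submodule.add_mem_iff_left C (C.smul_mem a hxC)).symm
  have h2 : ∀ c : Fin n → F, ψ (∑ i, u i * (c + a • x) i) = ψ (b * a) * ψ (∑ i, u i * c i) := by
    intro c
    have hsum : ∑ i, u i * (c + a • x) i = (b * a) + ∑ i, u i * c i := by
      simp only [Pi.add_apply, Pi.smul_apply, smul_eq_mul, hbdef, Finset.sum_mul, Finset.mul_sum]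
      rw [← Finset.sum_add_distrib]
      refine Finset.sum_congr rfl fun i _ => by ring
    rw [hsum, AddChar.map_add_eq_mul]
  rw [Finset.sum_congr rfl (fun c _ => h2 c), ← Finset.mul_sum, ← hSdef] at h1
  exact eq_zero_of_mul_eq_self_left ha h1

/-- The covering radius of a linear code is at most its external distance. -/
theorem coveringRadius_le_externalDistance {F : Type*} [Field F] [Fintype F]
    [DecidableEq F] {q n : ℕ} (hq : Fintype.card F = q)
    (C : Submodule F (Fin n → F)) :
    coveringRadius (C : Set (Fin n → F)) ≤ externalDistance C := by
  classical
  set ψ : AddChar F ℂ := AddChar.FiniteField.primitiveChar_to_Complex F with hψdef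
  have hψ : ψ.IsPrimitive := AddChar.FiniteField.primitiveChar_to_Complex_isPrimitive F
  -- the finite set of nonzero dual weights
  have hWfin : {w : ℕ | w ≠ 0 ∧ ∃ y ∈ dualCode C, hammingNorm y = w}.Finite := by
    refine Set.Finite.subset (Set.finite_Icc 0 n) ?_
    rintro w ⟨hw, y, hy, rfl⟩
    exact Set.mem_Icc.mpr ⟨Nat.zero_le _, le_trans hammingNorm_le_card_fintype (by simp)⟩
  set W : Finset ℕ := hWfin.toFinset with hWdef
  have hWcard : W.card = externalDistance C := (Set.ncard_eq_toFinset_card _ hWfin).symm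
  -- the annihilator polynomial
  set f : Polynomial ℂ := ∏ w ∈ W, (Polynomial.X - Polynomial.C (w : ℂ)) with hfdef
  have hdeg : f.natDegree ≤ W.card := by
    refine le_trans (Polynomial.natDegree_prod_le _ _) (le_of_eq ?_)
    simp only [Polynomial.natDegree_X_sub_C]
    simp
  have hf0 : f.eval 0 ≠ 0 := by
    rw [hfdef, Polynomial.eval_prod]
    rw [Finset.prod_ne_zero_iff]
    intro w hw
    have hw0 : w ≠ 0 := (hWfin.mem_toFinset.mp hw).1
    simp only [Polynomial.eval_sub, Polynomial.eval_X, Polynomial.eval_C, zero_sub, neg_ne_zero]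
    exact_mod_cast hw0
  have hfW : ∀ w ∈ W, f.eval (w : ℂ) = 0 := by
    intro w hw
    rw [hfdef, Polynomial.eval_prod]
    exact Finset.prod_eq_zero hw (by simp)
  -- the code as a finset
  set CF : Finset (Fin n → F) := (Set.toFinite (C : Set (Fin n → F))).toFinset with hCFdef
  have hCF : ∀ c, c ∈ CF ↔ c ∈ C := fun c => Set.Finite.mem_toFinset _
  -- main bound on distToCode
  have hmain : ∀ v : Fin n → F, distToCode (C : Set (Fin n → F)) v ≤ externalDistance C := by
    intro v
    -- the key double sum
    have hinner : ∀ u : Fin n → F,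
        ∑ c ∈ CF, f.eval (hammingNorm u : ℂ) * ψ (∑ i, u i * (c - v) i)
        = f.eval (hammingNorm u : ℂ) * ψ (- ∑ i, u i * v i) *
          (if u ∈ dualCode C then (CF.card : ℂ) else 0) := by
      intro u
      have hsplit : ∀ c : Fin n → F,
          ψ (∑ i, u i * (c - v) i) = ψ (∑ i, u i * c i) * ψ (- ∑ i, u i * v i) := by
        intro c
        rw [← AddChar.map_add_eq_mul]
        congr 1
        simp only [Pi.sub_apply, mul_sub]
        rw [Finset.sum_sub_distrib, sub_eq_add_neg]
      simp_rw [hsplit]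
      by_cases hu : u ∈ dualCode C
      · have hc0 : ∀ c ∈ CF, ψ (∑ i, u i * c i) = 1 := by
          intro c hc
          have : ∑ i, c i * u i = 0 := hu c ((hCF c).mp hc)
          have h' : ∑ i, u i * c i = 0 := by
            rw [← this]; exact Finset.sum_congr rfl fun i _ => mul_comm _ _
          rw [h', AddChar.map_zero_eq_one]
        rw [if_pos hu]
        rw [Finset.sum_congr rfl (fun c hc => by rw [hc0 c hc])]
        simp only [mul_one, Finset.sum_const, nsmul_eq_mul]
        ring
      · rw [if_neg hu, mul_zero]
        have hz := sum_over_code ψ hψ C CF hCF hu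
        calc ∑ c ∈ CF, f.eval (hammingNorm u : ℂ) * (ψ (∑ i, u i * c i) * ψ (- ∑ i, u i * v i))
            = (f.eval (hammingNorm u : ℂ) * ψ (- ∑ i, u i * v i)) * ∑ c ∈ CF, ψ (∑ i, u i * c i) := by
              rw [Finset.mul_sum]; exact Finset.sum_congr rfl fun c _ => by ring
          _ = 0 := by rw [hz, mul_zero]
    have hT : ∑ c ∈ CF, ∑ u : Fin n → F, f.eval (hammingNorm u : ℂ) * ψ (∑ i, u i * (c - v) i)
        = (CF.card : ℂ) * f.eval 0 := by
      rw [Finset.sum_comm]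
      rw [Finset.sum_congr rfl fun u _ => hinner u]
      rw [show ∑ u : Fin n → F, f.eval (hammingNorm u : ℂ) * ψ (- ∑ i, u i * v i) *
            (if u ∈ dualCode C then (CF.card : ℂ) else 0)
          = ∑ u ∈ Finset.univ.filter (fun u => u ∈ dualCode C),
              f.eval (hammingNorm u : ℂ) * ψ (- ∑ i, u i * v i) * (CF.card : ℂ) by
        rw [Finset.sum_filter]
        exact Finset.sum_congr rfl fun u _ => by split <;> simp]
      rw [Finset.sum_eq_single_of_mem (0 : Fin n → F)]
      · simp [AddChar.map_zero_eq_one]; ring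
      · simp only [Finset.mem_filter, Finset.mem_univ, true_and]
        intro x hx; simp [dualCode]
      · intro u hu hu0
        have humem : u ∈ dualCode C := (Finset.mem_filter.mp hu).2
        have hwmem : hammingNorm u ∈ W := hWfin.mem_toFinset.mpr
          ⟨hammingNorm_ne_zero_iff.mpr hu0, u, humem, rfl⟩
        rw [hfW _ hwmem, zero_mul, zero_mul]
    have hTne : ∑ c ∈ CF, ∑ u : Fin n → F,
        f.eval (hammingNorm u : ℂ) * ψ (∑ i, u i * (c - v) i) ≠ 0 := by
      rw [hT]
      apply mul_ne_zero _ hf0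
      have h0 : (0 : Fin n → F) ∈ CF := (hCF 0).mpr (Submodule.zero_mem C)
      exact Nat.cast_ne_zero.mpr (Finset.card_ne_zero_of_mem h0)
    obtain ⟨c, hcCF, hgc⟩ := Finset.exists_ne_zero_of_sum_ne_zero hTne
    have hwt : hammingNorm (c - v) ≤ f.natDegree := by
      by_contra hlt
      push_neg at hlt
      exact hgc (poly_support ψ hψ f hlt)
    have hdist : hammingDist v c ≤ externalDistance C := by
      rw [hammingDist_eq_hammingNorm, neg_add_eq_sub]
      exact le_trans hwt (le_trans hdeg (le_of_eq hWcard))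
    exact le_trans (Nat.sInf_le ⟨c, (hCF c).mp hcCF, rfl⟩) hdist
  refine csSup_le ⟨distToCode (C : Set (Fin n → F)) 0, 0, rfl⟩ ?_
  rintro r ⟨v, rfl⟩
  exact hmain v
end

section
/- Let F be a finite field with q elements and let C be a linear code in F^n with covering radius ρ. If C is completely regular, then C is uniformly packed in the wide sense: there exist rational numbers β_0, β_1, …, β_ρ such that for every v ∈ F^n, ∑_{k=0}^{ρ} β_k · |{c ∈ C : d(v,c) = k}| = 1. -/
open scoped BigOperators

/-- `C` is completely regular: for every `l ≤ ρ` there are numbers `c_l`, `b_l`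
such that every vector at distance `l` from `C` has exactly `c_l` neighbors at
distance `l - 1` from `C` and exactly `b_l` neighbors at distance `l + 1`
from `C` (neighbors at distance `l - 1` are described by
`distToCode C y + 1 = l`, so that for `l = 0` the set is empty). -/
def CompletelyRegular {F : Type*} [DecidableEq F] {n : ℕ}
    (C : Set (Fin n → F)) : Prop :=
  ∀ l ≤ coveringRadius C, ∃ cl bl : ℕ, ∀ x : Fin n → F, distToCode C x = l →
    Nat.card {y : Fin n → F | hammingDist x y = 1 ∧ distToCode C y + 1 = l} = cl ∧
    Nat.card {y : Fin n → F | hammingDist x y = 1 ∧ distToCode C y = l + 1} = bl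

/-- `C` is uniformly packed in the wide sense with respect to the radius `ρ`. -/
def UniformlyPacked {F : Type*} [DecidableEq F] {n : ℕ}
    (C : Set (Fin n → F)) (ρ : ℕ) : Prop :=
  ∃ β : ℕ → ℚ, ∀ v : Fin n → F,
    ∑ k ∈ Finset.range (ρ + 1),
      β k * (Nat.card {c : Fin n → F | c ∈ C ∧ hammingDist v c = k} : ℚ) = 1

section Auxiliary

open Finset
set_option linter.unusedSectionVars false
set_option maxHeartbeats 1000000

namespace CRUP

variable {F : Type*} [Fintype F] [DecidableEq F] {n : ℕ}

lemma natCard_eq {α : Type*} [Fintype α] [DecidableEq α] (p : α → Prop) [DecidablePred p] :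
    Nat.card {y : α | p y} = (univ.filter p).card := by
  simp [Nat.card_coe_set_eq, Set.ncard_eq_toFinset_card', Set.toFinset_setOf,
    Fintype.card_subtype]

/-- Number of walks of length `j` from `u` to `c` in the Hamming graph. -/
def walks : ℕ → (Fin n → F) → (Fin n → F) → ℕ
  | 0, u, c => if u = c then 1 else 0
  | j+1, u, c => ∑ y ∈ univ.filter (fun y => hammingDist u y = 1), walks j y c

lemma walks_congr (σ : (Fin n → F) ≃ (Fin n → F))
    (hσ : ∀ x y, hammingDist (σ x) (σ y) = hammingDist x y) :
    ∀ (j : ℕ) (u c : Fin n → F), walks j (σ u) (σ c) = walks j u c := by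
  intro j
  induction j with
  | zero =>
    intro u c
    simp [walks, σ.apply_eq_iff_eq]
  | succ j ih =>
    intro u c
    rw [walks, walks]
    refine Finset.sum_nbij' (fun y => σ.symm y) (fun y => σ y) ?_ ?_ ?_ ?_ ?_
    · intro y hy
      simp only [mem_filter, mem_univ, true_and] at hy ⊢
      rw [← hσ]
      simpa using hy
    · intro y hy
      simp only [mem_filter, mem_univ, true_and] at hy ⊢
      rw [hσ]; exact hy
    · intro y _; simp
    · intro y _; simp
    · intro y _
      rw [← ih (σ.symm y) c]
      simp

section Translate
variable [AddCommGroup F]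

lemma hammingDist_sub (x y t : Fin n → F) :
    hammingDist (x - t) (y - t) = hammingDist x y := by
  unfold hammingDist
  congr 1
  ext i
  simp [sub_left_inj]

lemma card_nbrs_const (v w : Fin n → F) :
    (univ.filter fun y => hammingDist v y = 1).card
      = (univ.filter fun y => hammingDist w y = 1).card := by
  refine Finset.card_nbij' (fun y => y - v + w) (fun y => y - w + v) ?_ ?_ ?_ ?_
  · intro y hy
    simp only [Finset.mem_coe, mem_filter, mem_univ, true_and] at hy ⊢
    calc hammingDist w (y - v + w) = hammingDist (w - w) (y - v + w - w) := by
          rw [hammingDist_sub (F := F)]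
      _ = hammingDist v y := by
          rw [sub_self, add_sub_cancel_right]
          calc hammingDist (0 : Fin n → F) (y - v) = hammingDist (v - v) (y - v) := by
                rw [sub_self]
            _ = hammingDist v y := hammingDist_sub _ _ _
      _ = 1 := hy
  · intro y hy
    simp only [Finset.mem_coe, mem_filter, mem_univ, true_and] at hy ⊢
    calc hammingDist v (y - w + v) = hammingDist (v - v) (y - w + v - v) := by
          rw [hammingDist_sub (F := F)]
      _ = hammingDist w y := by
          rw [sub_self, add_sub_cancel_right]
          calc hammingDist (0 : Fin n → F) (y - w) = hammingDist (w - w) (y - w) := by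
                rw [sub_self]
            _ = hammingDist w y := hammingDist_sub _ _ _
      _ = 1 := hy
  · intro y _; simp only []; rw [add_sub_cancel_right, sub_add_cancel]
  · intro y _; simp only []; rw [add_sub_cancel_right, sub_add_cancel]

end Translate

section Zero
variable [Zero F]

/-- An isometry of the Hamming space fixing `0` and sending `c` to `c'`,
when `c` and `c'` have the same weight. -/
lemma exists_isometry_zero (c c' : Fin n → F)
    (h : hammingDist (0 : Fin n → F) c = hammingDist (0 : Fin n → F) c') :
    ∃ σ : (Fin n → F) ≃ (Fin n → F),
      (∀ x y, hammingDist (σ x) (σ y) = hammingDist x y) ∧ σ 0 = 0 ∧ σ c = c' := by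
  classical
  have hcard : Fintype.card {i // c i ≠ 0} = Fintype.card {i // c' i ≠ 0} := by
    rw [Fintype.card_subtype, Fintype.card_subtype]
    have h1 : hammingDist (0 : Fin n → F) c = (univ.filter fun i => c i ≠ 0).card := by
      unfold hammingDist; congr 1; ext i; simp [ne_comm]
    have h2 : hammingDist (0 : Fin n → F) c' = (univ.filter fun i => c' i ≠ 0).card := by
      unfold hammingDist; congr 1; ext i; simp [ne_comm]
    omega
  obtain ⟨e⟩ := Fintype.card_eq.mp hcard
  set π : Equiv.Perm (Fin n) := e.extendSubtype with hπ
  have hsupp : ∀ i : Fin n, c (π.symm i) ≠ 0 ↔ c' i ≠ 0 := by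
    intro i
    have key : ∀ x : Fin n, c x ≠ 0 ↔ c' (π x) ≠ 0 := by
      intro x
      by_cases hx : c x ≠ 0
      · simp [hx, hπ, e.extendSubtype_mem x hx]
      · simp [hx, hπ, e.extendSubtype_not_mem x hx]
    have := key (π.symm i)
    rwa [Equiv.apply_symm_apply] at this
  set g : Fin n → (F ≃ F) := fun i => Equiv.swap (c (π.symm i)) (c' i) with hg
  refine ⟨⟨fun x i => g i (x (π.symm i)), fun y j => (g (π j)).symm (y (π j)), ?_, ?_⟩, ?_, ?_, ?_⟩
  · intro x; funext j; simp
  · intro y; funext i; simp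
  · intro x y
    unfold hammingDist
    have hfil : (univ.filter fun i =>
          (fun i => g i (x (π.symm i))) i ≠ (fun i => g i (y (π.symm i))) i)
        = univ.filter fun i => x (π.symm i) ≠ y (π.symm i) := by
      ext i; simp [(g i).injective.ne_iff]
    show (univ.filter fun i =>
        (fun i => g i (x (π.symm i))) i ≠ (fun i => g i (y (π.symm i))) i).card = _
    rw [hfil]
    refine Finset.card_nbij' (fun i => π.symm i) (fun j => π j) ?_ ?_ ?_ ?_
    · intro i hi; simpa using (by simpa using hi)
    · intro j hj; simpa using (by simpa using hj)
    · intro i _; simp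
    · intro j _; simp
  · funext i
    show g i ((0 : Fin n → F) (π.symm i)) = 0
    by_cases hc : c (π.symm i) ≠ 0
    · have hc' : c' i ≠ 0 := (hsupp i).mp hc
      exact Equiv.swap_apply_of_ne_of_ne (Ne.symm hc) (Ne.symm hc')
    · push_neg at hc
      have hc' : c' i = 0 := by
        by_contra hc'
        exact (hsupp i).mpr hc' hc
      simp [hg, hc, hc']
  · funext i
    show g i (c (π.symm i)) = c' i
    simp [hg]

end Zero

variable {C : Set (Fin n → F)}

lemma distToCode_spec (hC : C.Nonempty) (v : Fin n → F) :
    ∃ c ∈ C, hammingDist v c = distToCode C v := by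
  have hne : {d | ∃ c ∈ C, hammingDist v c = d}.Nonempty := by
    obtain ⟨c, hc⟩ := hC
    exact ⟨hammingDist v c, c, hc, rfl⟩
  exact Nat.sInf_mem hne

lemma distToCode_le {c : Fin n → F} (hc : c ∈ C) (v : Fin n → F) :
    distToCode C v ≤ hammingDist v c :=
  Nat.sInf_le ⟨c, hc, rfl⟩

lemma distToCode_le_n (hC : C.Nonempty) (v : Fin n → F) : distToCode C v ≤ n := by
  obtain ⟨c, hc⟩ := hC
  refine le_trans (distToCode_le hc v) ?_
  simpa using (hammingDist_le_card_fintype (x := v) (y := c))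

lemma distToCode_le_coveringRadius (hC : C.Nonempty) (v : Fin n → F) :
    distToCode C v ≤ coveringRadius C := by
  refine le_csSup ⟨n, ?_⟩ ⟨v, rfl⟩
  rintro r ⟨w, rfl⟩
  exact distToCode_le_n hC w

lemma coveringRadius_le_n (hC : C.Nonempty) : coveringRadius C ≤ n := by
  obtain ⟨c, hc⟩ := hC
  refine csSup_le ⟨distToCode C c, c, rfl⟩ ?_
  rintro r ⟨w, rfl⟩
  exact distToCode_le_n ⟨c, hc⟩ w

lemma distToCode_lipschitz (hC : C.Nonempty) {x y : Fin n → F} :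
    distToCode C y ≤ distToCode C x + hammingDist x y := by
  obtain ⟨c, hc, hd⟩ := distToCode_spec hC x
  calc distToCode C y ≤ hammingDist y c := distToCode_le hc y
    _ ≤ hammingDist y x + hammingDist x c := hammingDist_triangle _ _ _
    _ = distToCode C x + hammingDist x y := by rw [hd, hammingDist_comm, Nat.add_comm]

lemma distToCode_eq_zero_iff (hC : C.Nonempty) {v : Fin n → F} :
    distToCode C v = 0 ↔ v ∈ C := by
  constructor
  · intro h
    obtain ⟨c, hc, hd⟩ := distToCode_spec hC v
    rw [h] at hd
    rw [hammingDist_eq_zero.mp hd]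
    exact hc
  · intro h
    have := distToCode_le h v
    simpa using this

section FieldPart
variable [Field F]

/-- Walk counts only depend on the distance. -/
lemma walks_dist {u c u' c' : Fin n → F} (h : hammingDist u c = hammingDist u' c') (j : ℕ) :
    walks j u c = walks j u' c' := by
  classical
  have tr : ∀ (u c : Fin n → F), walks j u c = walks j 0 (c - u) ∧
      hammingDist (0 : Fin n → F) (c - u) = hammingDist u c := by
    intro u c
    constructor
    · have := walks_congr (Equiv.subRight u) (fun x y => hammingDist_sub x y u) j u c
      simpa using this.symm
    · have := hammingDist_sub u c u
      simpa using this
  obtain ⟨t1, d1⟩ := tr u c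
  obtain ⟨t2, d2⟩ := tr u' c'
  rw [t1, t2]
  obtain ⟨σ, hσ, h0, hc⟩ := exists_isometry_zero (c - u) (c' - u') (by rw [d1, d2, h])
  calc walks j 0 (c - u) = walks j (σ 0) (σ (c - u)) := (walks_congr σ hσ j _ _).symm
    _ = walks j 0 (c' - u') := by rw [h0, hc]

lemma walks_eq_zero {u c : Fin n → F} {j : ℕ} (h : j < hammingDist u c) : walks j u c = 0 := by
  induction j generalizing u with
  | zero =>
    have : u ≠ c := by intro e; rw [e] at h; simp at h
    simp [walks, this]
  | succ j ih =>
    rw [walks]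
    apply Finset.sum_eq_zero
    intro y hy
    simp only [mem_filter, mem_univ, true_and] at hy
    apply ih
    have := hammingDist_triangle u y c
    omega

lemma walks_pos {u c : Fin n → F} {j : ℕ} (h : hammingDist u c = j) : 0 < walks j u c := by
  induction j generalizing u with
  | zero =>
    have : u = c := hammingDist_eq_zero.mp h
    simp [walks, this]
  | succ j ih =>
    have hne : u ≠ c := by intro e; rw [e] at h; simp at h
    obtain ⟨i, hi⟩ : ∃ i, u i ≠ c i := by
      by_contra hall; push_neg at hall; exact hne (funext hall)
    set y := Function.update u i (c i) with hy
    have hd1 : hammingDist u y = 1 := by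
      have : (univ.filter fun jj => u jj ≠ y jj) = {i} := by
        ext jj
        by_cases hjj : jj = i <;> simp [hy, hjj, Function.update_apply, hi]
      unfold hammingDist
      rw [this, card_singleton]
    have hd2 : hammingDist y c = j := by
      have hfe : (univ.filter fun jj => y jj ≠ c jj)
          = (univ.filter fun jj => u jj ≠ c jj).erase i := by
        ext jj
        by_cases hjj : jj = i <;> simp [hy, hjj, Function.update_apply]
      have hmem : i ∈ univ.filter fun jj => u jj ≠ c jj := by simp [hi]
      unfold hammingDist at h ⊢
      rw [hfe, card_erase_of_mem hmem]
      omega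
    rw [walks]
    have hmem : y ∈ univ.filter (fun z => hammingDist u z = 1) := by simp [hd1]
    calc 0 < walks j y c := ih hd2
      _ ≤ _ := Finset.single_le_sum (f := fun z => walks j z c) (fun _ _ => Nat.zero_le _) hmem

/-- canonical vector of weight `k` -/
def ee (k : ℕ) : Fin n → F := fun i => if (i : ℕ) < k then 1 else 0

lemma hammingDist_zero_ee {k : ℕ} (hk : k ≤ n) :
    hammingDist (0 : Fin n → F) (ee k) = k := by
  unfold hammingDist
  have : (univ.filter fun i : Fin n => (0 : Fin n → F) i ≠ ee k i)
      = univ.filter fun i : Fin n => (i : ℕ) < k := by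
    ext i
    by_cases hik : (i : ℕ) < k <;> simp [ee, hik]
  rw [this, ← Finset.card_range k]
  refine Finset.card_bij' (fun i _ => (i : ℕ))
    (fun a ha => ⟨a, lt_of_lt_of_le (mem_range.mp ha) hk⟩) ?_ ?_ ?_ ?_
  · intro a ha; simp only [mem_filter, mem_univ, true_and] at ha; simpa using ha
  · intro a ha; simpa using mem_range.mp ha
  · intro a _; simp
  · intro a _; simp

/-- Sum of walk counts into the code. -/
def wsum (CF : Finset (Fin n → F)) (j : ℕ) (v : Fin n → F) : ℕ :=
  ∑ c ∈ CF, walks j v c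

lemma wsum_succ (CF : Finset (Fin n → F)) (j : ℕ) (v : Fin n → F) :
    wsum CF (j+1) v = ∑ y ∈ univ.filter (fun y => hammingDist v y = 1), wsum CF j y := by
  unfold wsum
  simp only [walks]
  rw [Finset.sum_comm]

lemma wsum_congr (hC0 : (0 : Fin n → F) ∈ C) (hCR : CompletelyRegular C)
    (CF : Finset (Fin n → F)) (hCF : ∀ c, c ∈ CF ↔ c ∈ C) :
    ∀ (j : ℕ) (v v' : Fin n → F), distToCode C v = distToCode C v' →
      wsum CF j v = wsum CF j v' := by
  classical
  have hC : C.Nonempty := ⟨0, hC0⟩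
  intro j
  induction j with
  | zero =>
    intro v v' h
    have hv : ∀ w : Fin n → F, wsum CF 0 w = if w ∈ CF then 1 else 0 := by
      intro w
      unfold wsum
      simp only [walks]
      exact Finset.sum_ite_eq CF w (fun _ => 1)
    rw [hv, hv]
    have hmem : (v ∈ CF) ↔ (v' ∈ CF) := by
      rw [hCF, hCF, ← distToCode_eq_zero_iff hC, ← distToCode_eq_zero_iff hC, h]
    by_cases hvC : v ∈ CF
    · rw [if_pos hvC, if_pos (hmem.mp hvC)]
    · rw [if_neg hvC, if_neg (fun hh => hvC (hmem.mpr hh))]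
  | succ j ih =>
    intro v v' h
    set l := distToCode C v with hl
    have hl' : distToCode C v' = l := h.symm
    have hlρ : l ≤ coveringRadius C := hl ▸ distToCode_le_coveringRadius hC v
    obtain ⟨cl, bl, hclbl⟩ := hCR l hlρ
    -- representative value of `wsum CF j` on each level set
    set g : ℕ → ℕ := fun m =>
      if hm : ∃ y : Fin n → F, distToCode C y = m then wsum CF j hm.choose else 0 with hgdef
    have hg : ∀ y : Fin n → F, wsum CF j y = g (distToCode C y) := by
      intro y
      have hm : ∃ z : Fin n → F, distToCode C z = distToCode C y := ⟨y, rfl⟩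
      simp only [hgdef, dif_pos hm]
      exact ih y hm.choose hm.choose_spec.symm
    -- fibers of distToCode on the neighborhood
    set fib : (Fin n → F) → ℕ → ℕ := fun w m =>
      ((univ.filter fun y => hammingDist w y = 1).filter fun y => distToCode C y = m).card
      with hfib
    have hmaps : ∀ w : Fin n → F, distToCode C w = l →
        ∀ y ∈ univ.filter fun y => hammingDist w y = 1, distToCode C y ∈ range (l + 2) := by
      intro w hw y hy
      simp only [mem_filter, mem_univ, true_and] at hy
      have := distToCode_lipschitz hC (x := w) (y := y)
      rw [hw, hy] at this
      simp only [mem_range]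
      omega
    have key : ∀ w : Fin n → F, distToCode C w = l →
        wsum CF (j+1) w = ∑ m ∈ range (l + 2), fib w m * g m := by
      intro w hw
      rw [wsum_succ]
      rw [← Finset.sum_fiberwise_of_maps_to (hmaps w hw) (fun y => wsum CF j y)]
      refine Finset.sum_congr rfl ?_
      intro m _
      have : ∀ y ∈ (univ.filter fun y => hammingDist w y = 1).filter
          (fun y => distToCode C y = m), wsum CF j y = g m := by
        intro y hy
        simp only [mem_filter, mem_univ, true_and] at hy
        rw [hg y, hy.2]
      rw [Finset.sum_congr rfl this, Finset.sum_const, smul_eq_mul]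
    -- fiber counts
    have fib_small : ∀ w : Fin n → F, distToCode C w = l → ∀ m, m + 1 < l → fib w m = 0 := by
      intro w hw m hm
      rw [hfib]
      simp only [Finset.card_eq_zero]
      rw [Finset.filter_filter]
      apply Finset.filter_false_of_mem
      intro y _
      intro hcon
      have := distToCode_lipschitz hC (x := y) (y := w)
      rw [hw, hcon.2, hammingDist_comm, hcon.1] at this
      omega
    have fib_cl : ∀ w : Fin n → F, distToCode C w = l → ∀ m, m + 1 = l → fib w m = cl := by
      intro w hw m hm
      have := (hclbl w hw).1
      rw [natCard_eq] at this
      rw [hfib]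
      simp only [Finset.filter_filter]
      rw [← this]
      congr 1
      apply Finset.filter_congr
      intro y _
      constructor
      · rintro ⟨h1, h2⟩; exact ⟨h1, by omega⟩
      · rintro ⟨h1, h2⟩; exact ⟨h1, by omega⟩
    have fib_bl : ∀ w : Fin n → F, distToCode C w = l → fib w (l + 1) = bl := by
      intro w hw
      have := (hclbl w hw).2
      rw [natCard_eq] at this
      rw [hfib]
      simp only [Finset.filter_filter]
      rw [← this]
    have hcl0 : l = 0 → cl = 0 := by
      intro h0
      have := (hclbl v (by omega)).1
      rw [natCard_eq] at this
      rw [← this]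
      simp only [Finset.card_eq_zero]
      apply Finset.filter_false_of_mem
      intro y _
      rw [h0]
      rintro ⟨-, hcon⟩
      omega
    have hKsum : ∀ w : Fin n → F, distToCode C w = l →
        (univ.filter fun y => hammingDist w y = 1).card = cl + fib w l + bl := by
      intro w hw
      rw [Finset.card_eq_sum_card_fiberwise (hmaps w hw)]
      have e1 : l + 2 = (l + 1) + 1 := rfl
      rw [e1, Finset.sum_range_succ, Finset.sum_range_succ]
      have h2 : ∑ m ∈ range l,
          ((univ.filter fun y => hammingDist w y = 1).filter
            fun y => distToCode C y = m).card = cl := by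
        rcases Nat.eq_zero_or_pos l with h0 | h0
        · rw [h0]
          rw [Finset.range_zero, Finset.sum_empty, hcl0 h0]
        · rw [Finset.sum_eq_single_of_mem (l - 1) (mem_range.mpr (by omega))]
          · exact fib_cl w hw (l - 1) (by omega)
          · intro m hm hne
            exact fib_small w hw m (by simp only [mem_range] at hm; omega)
      rw [h2]
      have h3 : ((univ.filter fun y => hammingDist w y = 1).filter
          fun y => distToCode C y = l + 1).card = bl := fib_bl w hw
      rw [h3]
    -- conclude
    rw [key v hl.symm, key v' hl']
    refine Finset.sum_congr rfl ?_
    intro m hm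
    simp only [mem_range] at hm
    have : fib v m = fib v' m := by
      rcases Nat.lt_or_ge (m + 1) l with h1 | h1
      · rw [fib_small v hl.symm m h1, fib_small v' hl' m h1]
      · rcases Nat.eq_or_lt_of_le h1 with h2 | h2
        · rw [fib_cl v hl.symm m h2.symm, fib_cl v' hl' m h2.symm]
        · rcases Nat.eq_or_lt_of_le h2 with h3 | h3
          · -- m = l
            have hm' : m = l := by omega
            subst hm'
            have k1 := hKsum v hl.symm
            have k2 := hKsum v' hl'
            have k3 := card_nbrs_const (n := n) (F := F) v v'
            omega
          · -- m = l + 1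
            have hm' : m = l + 1 := by omega
            subst hm'
            rw [fib_bl v hl.symm, fib_bl v' hl']
    rw [this]

lemma Nk_congr (hC0 : (0 : Fin n → F) ∈ C) (hCR : CompletelyRegular C)
    (CF : Finset (Fin n → F)) (hCF : ∀ c, c ∈ CF ↔ c ∈ C) :
    ∀ k : ℕ, k ≤ n → ∀ v v' : Fin n → F, distToCode C v = distToCode C v' →
      (CF.filter fun c => hammingDist v c = k).card
        = (CF.filter fun c => hammingDist v' c = k).card := by
  classical
  have hC : C.Nonempty := ⟨0, hC0⟩
  have expand : ∀ (jj : ℕ) (v : Fin n → F), wsum CF jj v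
      = ∑ kk ∈ range (n + 1),
          (CF.filter fun c => hammingDist v c = kk).card * walks jj (0 : Fin n → F) (ee kk) := by
    intro jj v
    unfold wsum
    have hmaps : ∀ c ∈ CF, hammingDist v c ∈ range (n + 1) := by
      intro c _
      simp only [mem_range]
      have := hammingDist_le_card_fintype (x := v) (y := c)
      simpa using Nat.lt_succ_of_le (by simpa using this)
    rw [← Finset.sum_fiberwise_of_maps_to hmaps (fun c => walks jj v c)]
    refine Finset.sum_congr rfl ?_
    intro kk hkk
    simp only [mem_range] at hkk
    have hkn : kk ≤ n := by omega
    have : ∀ c ∈ CF.filter fun c => hammingDist v c = kk,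
        walks jj v c = walks jj (0 : Fin n → F) (ee kk) := by
      intro c hc
      simp only [mem_filter] at hc
      exact walks_dist (by rw [hc.2, hammingDist_zero_ee hkn]) jj
    rw [Finset.sum_congr rfl this, Finset.sum_const, smul_eq_mul]
  intro k
  induction k using Nat.strong_induction_on with
  | _ k ihk =>
    intro hk v v' h
    have e1 := expand k v
    have e2 := expand k v'
    have hw : wsum CF k v = wsum CF k v' := wsum_congr hC0 hCR CF hCF k v v' h
    have hsub : range (k + 1) ⊆ range (n + 1) := by
      intro a ha; simp only [mem_range] at ha ⊢; omega
    have hvanish : ∀ v₀ : Fin n → F, ∀ kk ∈ range (n + 1), kk ∉ range (k + 1) →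
        (CF.filter fun c => hammingDist v₀ c = kk).card
          * walks k (0 : Fin n → F) (ee kk) = 0 := by
      intro v₀ kk hkk hkk'
      simp only [mem_range] at hkk hkk'
      have hkn : kk ≤ n := by omega
      have : walks k (0 : Fin n → F) (ee kk) = 0 :=
        walks_eq_zero (by rw [hammingDist_zero_ee hkn]; omega)
      rw [this, Nat.mul_zero]
    rw [← Finset.sum_subset hsub (hvanish v)] at e1
    rw [← Finset.sum_subset hsub (hvanish v')] at e2
    rw [Finset.sum_range_succ] at e1 e2
    have hpartial : ∑ kk ∈ range k,
        (CF.filter fun c => hammingDist v c = kk).card * walks k (0 : Fin n → F) (ee kk)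
        = ∑ kk ∈ range k,
        (CF.filter fun c => hammingDist v' c = kk).card * walks k (0 : Fin n → F) (ee kk) := by
      refine Finset.sum_congr rfl ?_
      intro kk hkk
      simp only [mem_range] at hkk
      rw [ihk kk hkk (by omega) v v' h]
    have hpos : 0 < walks k (0 : Fin n → F) (ee k) := walks_pos (hammingDist_zero_ee hk)
    have : (CF.filter fun c => hammingDist v c = k).card * walks k (0 : Fin n → F) (ee k)
        = (CF.filter fun c => hammingDist v' c = k).card * walks k (0 : Fin n → F) (ee k) := by
      omega
    exact Nat.eq_of_mul_eq_mul_right hpos this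

end FieldPart

/-- Solve an "upper triangular" linear system by downward recursion. -/
noncomputable def gam (A : ℕ → ℕ → ℚ) (ρ : ℕ) : ℕ → ℚ
  | m => (1 - ∑ i ∈ (range m).attach, A (ρ - m) (ρ - (i : ℕ)) * gam A ρ (i : ℕ))
      / A (ρ - m) (ρ - m)
  termination_by m => m
  decreasing_by exact mem_range.mp i.2

lemma gam_spec (A : ℕ → ℕ → ℚ) (ρ m : ℕ) :
    gam A ρ m = (1 - ∑ i ∈ range m, A (ρ - m) (ρ - i) * gam A ρ i) / A (ρ - m) (ρ - m) := by
  rw [gam]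
  congr 1
  rw [← Finset.sum_attach (range m) (fun i => A (ρ - m) (ρ - i) * gam A ρ i)]

lemma exists_beta (A : ℕ → ℕ → ℚ) (ρ : ℕ) (hz : ∀ l k, k < l → A l k = 0)
    (hd : ∀ l, A l l ≠ 0) :
    ∃ β : ℕ → ℚ, ∀ l ≤ ρ, ∑ k ∈ range (ρ + 1), β k * A l k = 1 := by
  classical
  refine ⟨fun k => if k ≤ ρ then gam A ρ (ρ - k) else 0, ?_⟩
  intro l hl
  set m := ρ - l with hm
  have hsub : Finset.Ico l (ρ + 1) ⊆ range (ρ + 1) := by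
    intro a ha; simp only [Finset.mem_Ico] at ha; simp only [mem_range]; omega
  have hvanish : ∀ k ∈ range (ρ + 1), k ∉ Finset.Ico l (ρ + 1) →
      (if k ≤ ρ then gam A ρ (ρ - k) else 0) * A l k = 0 := by
    intro k hk hk'
    simp only [mem_range] at hk
    simp only [Finset.mem_Ico] at hk'
    have : k < l := by omega
    rw [hz l k this, mul_zero]
  rw [← Finset.sum_subset hsub hvanish]
  have hre : ∑ k ∈ Finset.Ico l (ρ + 1), (if k ≤ ρ then gam A ρ (ρ - k) else 0) * A l k
      = ∑ i ∈ range (m + 1), gam A ρ i * A l (ρ - i) := by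
    refine Finset.sum_nbij' (fun k => ρ - k) (fun i => ρ - i) ?_ ?_ ?_ ?_ ?_
    · intro k hk; simp only [Finset.mem_Ico] at hk; simp only [mem_range]; omega
    · intro i hi; simp only [mem_range] at hi; simp only [Finset.mem_Ico]; omega
    · intro k hk; simp only [Finset.mem_Ico] at hk; show ρ - (ρ - k) = k; omega
    · intro i hi; simp only [mem_range] at hi; show ρ - (ρ - i) = i; omega
    · intro k hk
      simp only [Finset.mem_Ico] at hk
      have hkρ : k ≤ ρ := by omega
      rw [if_pos hkρ]
      have : ρ - (ρ - k) = k := by omega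
      rw [this]
  rw [hre, Finset.sum_range_succ]
  have hρm : ρ - m = l := by omega
  rw [gam_spec, hρm]
  have hS : ∑ i ∈ range m, gam A ρ i * A l (ρ - i)
      = ∑ i ∈ range m, A l (ρ - i) * gam A ρ i := by
    refine Finset.sum_congr rfl ?_
    intro i _
    ring
  rw [hS, div_mul_cancel₀ _ (hd l)]
  ring

end CRUP

end Auxiliary

/-- A completely regular linear code is uniformly packed in the wide sense. -/
theorem completelyRegular_uniformlyPacked
    {F : Type*} [Field F] [Fintype F] [DecidableEq F] {q n : ℕ}
    (hq : Fintype.card F = q) (C : Submodule F (Fin n → F))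
    (hCR : CompletelyRegular (C : Set (Fin n → F))) :
    UniformlyPacked (C : Set (Fin n → F)) (coveringRadius (C : Set (Fin n → F))) := by
  classical
  open Finset CRUP in
  set Cs : Set (Fin n → F) := (C : Set (Fin n → F)) with hCs
  have hC0 : (0 : Fin n → F) ∈ Cs := C.zero_mem
  have hC : Cs.Nonempty := ⟨0, hC0⟩
  set ρ := coveringRadius Cs with hρ
  have hρn : ρ ≤ n := coveringRadius_le_n hC
  set CF : Finset (Fin n → F) := Finset.univ.filter (fun c => c ∈ Cs) with hCFdef
  have hCF : ∀ c, c ∈ CF ↔ c ∈ Cs := by intro c; simp [hCFdef]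
  set Nk : (Fin n → F) → ℕ → ℕ :=
    fun v k => (CF.filter fun c => hammingDist v c = k).card with hNkdef
  have hNk_congr : ∀ k ≤ n, ∀ v v' : Fin n → F, distToCode Cs v = distToCode Cs v' →
      Nk v k = Nk v' k := fun k hk => Nk_congr hC0 hCR CF hCF k hk
  set A : ℕ → ℕ → ℚ := fun l k =>
    if hl : ∃ v : Fin n → F, distToCode Cs v = l then (Nk hl.choose k : ℚ)
    else (if k = l then 1 else 0) with hAdef
  have hNk_lt : ∀ (v : Fin n → F) (k : ℕ), k < distToCode Cs v → Nk v k = 0 := by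
    intro v k hk
    simp only [hNkdef, Finset.card_eq_zero]
    apply Finset.filter_false_of_mem
    intro c hc hcon
    have := distToCode_le ((hCF c).mp hc) v
    omega
  have hNk_diag : ∀ v : Fin n → F, 0 < Nk v (distToCode Cs v) := by
    intro v
    obtain ⟨c, hc, hd⟩ := distToCode_spec hC v
    simp only [hNkdef, Finset.card_pos]
    exact ⟨c, Finset.mem_filter.mpr ⟨(hCF c).mpr hc, hd⟩⟩
  have hA_zero : ∀ l k, k < l → A l k = 0 := by
    intro l k hkl
    by_cases hl : ∃ v : Fin n → F, distToCode Cs v = l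
    · simp only [hAdef, dif_pos hl]
      have : Nk hl.choose k = 0 := hNk_lt hl.choose k (by rw [hl.choose_spec]; exact hkl)
      exact_mod_cast this
    · simp only [hAdef, dif_neg hl]
      rw [if_neg (by omega)]
  have hA_diag : ∀ l, A l l ≠ 0 := by
    intro l
    by_cases hl : ∃ v : Fin n → F, distToCode Cs v = l
    · simp only [hAdef, dif_pos hl]
      have h := hNk_diag hl.choose
      rw [hl.choose_spec] at h
      have h2 : (0 : ℚ) < (Nk hl.choose l : ℚ) := by exact_mod_cast h
      exact h2.ne'
    · simp only [hAdef, dif_neg hl, if_pos rfl]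
      exact one_ne_zero
  obtain ⟨β, hβ⟩ := exists_beta A ρ hA_zero hA_diag
  refine ⟨β, ?_⟩
  intro v
  have hlv : distToCode Cs v ≤ ρ := distToCode_le_coveringRadius hC v
  have hterm : ∀ k ∈ Finset.range (ρ + 1),
      β k * (Nat.card {c : Fin n → F | c ∈ Cs ∧ hammingDist v c = k} : ℚ)
        = β k * A (distToCode Cs v) k := by
    intro k hk
    simp only [Finset.mem_range] at hk
    have hkn : k ≤ n := by omega
    congr 1
    have h1 : Nat.card {c : Fin n → F | c ∈ Cs ∧ hammingDist v c = k} = Nk v k := by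
      rw [natCard_eq]
      simp only [hNkdef, hCFdef, Finset.filter_filter]
    rw [h1]
    have hl : ∃ w : Fin n → F, distToCode Cs w = distToCode Cs v := ⟨v, rfl⟩
    simp only [hAdef, dif_pos hl]
    exact_mod_cast congrArg Nat.cast (hNk_congr k hkn v hl.choose hl.choose_spec.symm)
  rw [Finset.sum_congr rfl hterm]
  exact hβ (distToCode Cs v) hlv
end

section
/- Let q be a prime power and let ℓ, h be positive natural numbers. Then there exists a difference matrix D(q^ℓ, q^h) over the additive group F_q^ℓ, that is, a function D : Fin(q^{ℓ+h}) → Fin(q^{ℓ+h}) → F_q^ℓ such that for any two distinct row indices i ≠ j and every element v ∈ F_q^ℓ, the number of column indices k with D i k − D j k = v equals q^h. -/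
open Polynomial

lemma aux_dvd (p k : ℕ) [Fact p.Prime] :
    ∀ m : ℕ, m ≠ 0 → (X ^ p ^ k - X : (ZMod p)[X]) ∣ X ^ p ^ (k * m) - X := by
  intro m
  induction m with
  | zero => simp
  | succ m ih =>
    intro _
    rcases Nat.eq_zero_or_pos m with h0 | h0
    · subst h0; simp
    · have key : (X ^ p ^ (k * (m + 1)) - X : (ZMod p)[X]) =
          (X ^ p ^ (k * m) - X) ^ p ^ k + (X ^ p ^ k - X) := by
        rw [sub_pow_char_pow, ← pow_mul, ← pow_add]
        have : k * m + k = k * (m + 1) := by ring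
        rw [this]; ring
      rw [key]
      exact dvd_add (dvd_pow (ih h0.ne') (pow_ne_zero _ (Fact.out : p.Prime).pos.ne')) dvd_rfl

lemma main_aux {q ℓ h : ℕ} (hℓ : 1 ≤ ℓ) (hh : 1 ≤ h)
    (F : Type*) [Field F] [Fintype F] [DecidableEq F]
    (hq : Fintype.card F = q)
    (K : Type*) [Field K] [Fintype K] [Algebra F K]
    (hr : Module.finrank F K = ℓ + h) :
    ∃ D : Fin (q ^ (ℓ + h)) → Fin (q ^ (ℓ + h)) → (Fin ℓ → F),
      ∀ i j : Fin (q ^ (ℓ + h)), i ≠ j → ∀ v : Fin ℓ → F,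
        Nat.card {k : Fin (q ^ (ℓ + h)) | D i k - D j k = v} = q ^ h := by
  have hKcard : Fintype.card K = q ^ (ℓ + h) := by
    rw [Module.card_eq_pow_finrank (K := F) (V := K), hq, hr]
  haveI : FiniteDimensional F K := FiniteDimensional.of_finrank_pos (by omega)
  let b : Module.Basis (Fin (ℓ + h)) F K := (Module.finBasis F K).reindex (finCongr hr)
  let e : K ≃ₗ[F] (Fin (ℓ + h) → F) := b.equivFun
  let ι : Fin (q ^ (ℓ + h)) ≃ K := (Fintype.equivFinOfCardEq hKcard).symm
  refine ⟨fun i k m => e (ι i * ι k) (Fin.castAdd h m), ?_⟩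
  intro i j hij v
  set a : K := ι i - ι j with ha
  have ha0 : a ≠ 0 := sub_ne_zero.mpr (fun hem => hij (ι.injective hem))
  have key : ∀ k, ((fun m => e (ι i * ι k) (Fin.castAdd h m)) -
      (fun m => e (ι j * ι k) (Fin.castAdd h m)) : Fin ℓ → F) =
      fun m => e (a * ι k) (Fin.castAdd h m) := by
    intro k; funext m
    simp [ha, sub_mul, map_sub, Pi.sub_apply]
  let P : K → Prop := fun x => (fun m => e x (Fin.castAdd h m)) = v
  have E1 : {k : Fin (q ^ (ℓ + h)) // (fun m => e (ι i * ι k) (Fin.castAdd h m)) -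
      (fun m => e (ι j * ι k) (Fin.castAdd h m)) = v} ≃ {x : K // P (a * x)} :=
    Equiv.subtypeEquiv ι (fun k => by rw [key k])
  have E2 : {x : K // P (a * x)} ≃ {y : K // P y} :=
    Equiv.subtypeEquiv (Equiv.mulLeft₀ a ha0) (fun x => Iff.rfl)
  have E3 : {y : K // P y} ≃ {w : Fin (ℓ + h) → F // (fun m => w (Fin.castAdd h m)) = v} :=
    Equiv.subtypeEquiv e.toEquiv (fun y => Iff.rfl)
  have E4 : {w : Fin (ℓ + h) → F // (fun m => w (Fin.castAdd h m)) = v} ≃ (Fin h → F) := by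
    refine ⟨fun w t => w.1 (Fin.natAdd ℓ t),
      fun g => ⟨fun s => Sum.elim v g (finSumFinEquiv.symm s), ?_⟩, ?_, ?_⟩
    · funext m; simp [finSumFinEquiv_symm_apply_castAdd]
    · rintro ⟨w, hw⟩
      ext s
      have hs : finSumFinEquiv (finSumFinEquiv.symm s) = s := finSumFinEquiv.apply_symm_apply s
      rcases hsum : finSumFinEquiv.symm s with m | t
      · rw [hsum] at hs
        subst hs
        simp only [Equiv.symm_apply_apply, Sum.elim_inl, finSumFinEquiv_apply_left,
          finSumFinEquiv_symm_apply_castAdd]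
        exact (congrFun hw m).symm
      · rw [hsum] at hs
        subst hs
        simp
    · intro g; funext t; simp [finSumFinEquiv_symm_apply_natAdd]
  calc Nat.card {k : Fin (q ^ (ℓ + h)) | (fun m => e (ι i * ι k) (Fin.castAdd h m)) -
          (fun m => e (ι j * ι k) (Fin.castAdd h m)) = v}
      = Nat.card (Fin h → F) := Nat.card_congr ((E1.trans E2).trans (E3.trans E4))
    _ = q ^ h := by simp [Nat.card_eq_fintype_card, hq]

/-- For any prime power `q` (encoded by a finite field `F` with `q` elements)
and positive naturals `ℓ`, `h`, there exists a difference matrix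
`D(q^ℓ, q^h)` over the additive group `F^ℓ`: a square matrix of order
`q^(ℓ+h)` with entries in `Fin ℓ → F` such that the componentwise difference
of any two distinct rows contains every element exactly `q^h` times. -/
theorem exists_difference_matrix {q ℓ h : ℕ} (hℓ : 1 ≤ ℓ) (hh : 1 ≤ h)
    (F : Type*) [Field F] [Fintype F] [DecidableEq F]
    (hq : Fintype.card F = q) :
    ∃ D : Fin (q ^ (ℓ + h)) → Fin (q ^ (ℓ + h)) → (Fin ℓ → F),
      ∀ i j : Fin (q ^ (ℓ + h)), i ≠ j → ∀ v : Fin ℓ → F,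
        Nat.card {k : Fin (q ^ (ℓ + h)) | D i k - D j k = v} = q ^ h := by
  obtain ⟨p, _, k, hp, hk⟩ := FiniteField.card' F
  haveI : Fact p.Prime := ⟨hp⟩
  have hkn : k * (ℓ + h) ≠ 0 := by positivity
  letI K := GaloisField p (k * (ℓ + h))
  letI : Fintype K := Fintype.ofFinite K
  -- char of F is p
  haveI hcharF : CharP F p := by
    obtain ⟨p', hc⟩ := CharP.exists F
    haveI := hc
    have hp' : p'.Prime := CharP.char_is_prime F p'
    obtain ⟨k', _, hk'⟩ := FiniteField.card F p'
    have : p = p' := by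
      have hdvd : p ∣ p' ^ (k' : ℕ) := by
        rw [← hk', hk]
        exact dvd_pow_self p k.2.ne'
      exact ((Nat.prime_dvd_prime_iff_eq hp hp').mp (hp.dvd_of_dvd_pow hdvd))
    subst this; exact hc
  letI : Algebra (ZMod p) F := ZMod.algebra F p
  have hbig : Splits ((X ^ p ^ (k * (ℓ + h)) - X : (ZMod p)[X]).map (algebraMap (ZMod p) K)) := by
    have := FiniteField.splits_X_pow_nat_card_sub_X (p := p) (K := K)
    rwa [GaloisField.card p _ hkn] at this
  have hsp : Splits ((X ^ p ^ (k : ℕ) - X : (ZMod p)[X]).map (algebraMap (ZMod p) K)) :=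
    hbig.of_dvd
      (Polynomial.map_ne_zero (FiniteField.X_pow_card_pow_sub_X_ne_zero _ hkn hp.one_lt))
      (Polynomial.map_dvd _ (aux_dvd p k (ℓ + h) (by omega)))
  haveI := FiniteField.isSplittingField_of_nat_card_eq p (k : ℕ)
    (K := GaloisField p (k : ℕ)) (GaloisField.card p (k : ℕ) k.2.ne')
  letI ψ : GaloisField p k →ₐ[ZMod p] K :=
    IsSplittingField.lift (GaloisField p (k : ℕ)) (X ^ p ^ (k : ℕ) - X : (ZMod p)[X]) hsp
  letI φ₁ : F ≃ₐ[ZMod p] GaloisField p k :=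
    GaloisField.algEquivGaloisField p k (by rw [Nat.card_eq_fintype_card, hk])
  letI φ : F →+* K := (ψ.comp φ₁.toAlgHom).toRingHom
  letI : Algebra F K := φ.toAlgebra
  have hr : Module.finrank F K = ℓ + h := by
    have hcard : Fintype.card K = Fintype.card F ^ Module.finrank F K :=
      Module.card_eq_pow_finrank (K := F) (V := K)
    have hcardK : Fintype.card K = p ^ (k * (ℓ + h)) := by
      rw [← Nat.card_eq_fintype_card, GaloisField.card p _ hkn]
    rw [hcardK, hk, ← pow_mul] at hcard
    have := Nat.pow_right_injective hp.two_le hcard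
    have hk0 : (k : ℕ) ≠ 0 := k.2.ne'
    exact (Nat.eq_of_mul_eq_mul_left (Nat.pos_of_ne_zero hk0) this).symm
  exact main_aux hℓ hh F hq K hr
end

section
/- Let F be a finite field with q elements, let K be a field that is a finite-dimensional F-algebra with dim_F K = ℓ + h (ℓ, h ≥ 1), and let φ : K → F^ℓ be a surjective F-linear map. Then the multiplication table of K truncated by φ is a difference matrix D(q^ℓ, q^h): for any two distinct elements a ≠ b of K and every v ∈ F^ℓ, the number of elements c ∈ K with φ(a·c) − φ(b·c) = v equals q^h. -/
/-- Let `F` be a finite field with `q` elements, `K` a field extension of `F`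
of dimension `ℓ + h`, and `φ : K → F^ℓ` a surjective `F`-linear map.  Then the
multiplication table of `K` truncated by `φ` is a difference matrix
`D(q^ℓ, q^h)`: for distinct `a ≠ b` in `K` and every `v ∈ F^ℓ`, exactly `q^h`
elements `c ∈ K` satisfy `φ (a*c) - φ (b*c) = v`. -/
theorem mul_table_truncation_difference_matrix
    {F : Type*} [Field F] [Fintype F] [DecidableEq F] {q ℓ h : ℕ}
    (hq : Fintype.card F = q) (hℓ : 1 ≤ ℓ) (hh : 1 ≤ h)
    (K : Type*) [Field K] [Algebra F K] [FiniteDimensional F K]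
    (hdim : Module.finrank F K = ℓ + h)
    (φ : K →ₗ[F] (Fin ℓ → F)) (hφ : Function.Surjective φ) :
    ∀ a b : K, a ≠ b → ∀ v : Fin ℓ → F,
      Nat.card {c : K | φ (a * c) - φ (b * c) = v} = q ^ h := by
  have hK : Finite K := Module.finite_of_finite F
  intro a b hab v
  set d := a - b with hd
  have hd0 : d ≠ 0 := sub_ne_zero.2 hab
  let ψ : K →ₗ[F] (Fin ℓ → F) := φ.comp (LinearMap.mulLeft F d)
  have hψapp : ∀ c, ψ c = φ (d * c) := fun c => rfl
  have hψ : Function.Surjective ψ := by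
    intro y
    obtain ⟨x, hx⟩ := hφ y
    exact ⟨d⁻¹ * x, by rw [hψapp, mul_inv_cancel_left₀ hd0, hx]⟩
  -- fiber card lemma
  obtain ⟨c₀, hc₀⟩ := hψ v
  have hset : {c : K | φ (a * c) - φ (b * c) = v} = {c : K | ψ c = v} := by
    ext c
    simp only [Set.mem_setOf_eq, hψapp, hd, sub_mul, map_sub]
  rw [hset]
  have e : {c : K | ψ c = v} ≃ LinearMap.ker ψ :=
    { toFun := fun c => ⟨c.1 - c₀, by
        have hc : ψ c.1 = v := c.2
        simp only [LinearMap.mem_ker, map_sub]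
        rw [hc, hc₀, sub_self]⟩
      invFun := fun k => ⟨k.1 + c₀, by
        have hk := k.2
        simp only [LinearMap.mem_ker] at hk
        simp [Set.mem_setOf_eq, map_add, hk, hc₀]⟩
      left_inv := fun c => by simp
      right_inv := fun k => by simp }
  rw [Nat.card_congr e]
  -- kernel has finrank h
  have hrank : Module.finrank F (LinearMap.ker ψ) = h := by
    have := LinearMap.finrank_range_add_finrank_ker ψ
    rw [hdim, (LinearMap.range_eq_top.2 hψ), finrank_top, Module.finrank_pi, Fintype.card_fin] at this
    omega
  have : Finite (LinearMap.ker ψ) := Subtype.finite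
  have := Fintype.ofFinite (LinearMap.ker ψ)
  rw [Nat.card_eq_fintype_card, Module.card_eq_pow_finrank (K := F), hrank, hq]
end

section
/- Let G be a finite abelian group with |G| = q ≥ 2, let μ ≥ 1, and let D : Fin(qμ) → Fin(qμ) → G be a difference matrix D(q, μ). Let C ⊆ G^{qμ} be the set of all vectors of the form (fun k => D i k + g) for i ∈ Fin(qμ) and g ∈ G. Then |C| = q²μ, and for any two distinct elements x, y ∈ C: if x − y is a constant vector (all coordinates equal) then the Hamming distance d(x,y) = qμ, and otherwise d(x,y) = (q−1)μ. In particular C is a two-weight (qμ, q²μ, {(q−1)μ, qμ})_q-code. -/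
private lemma dm_aux {G : Type*} [AddCommGroup G] (a b c d : G) :
    a + c = b + d ↔ a - b = d - c := by
  rw [← sub_eq_zero, ← sub_eq_zero (a := a - b)]
  constructor <;> intro h <;> (rw [← h]; abel)

/-- Codes from difference matrices.  Let `G` be a finite abelian group of
order `q ≥ 2`, `D` a difference matrix `D(q, μ)`, and let `C` be the set of
all rows of all translates `D^{(g)}`, `g ∈ G`.  Then `|C| = q²μ` and any two
distinct codewords are at Hamming distance `qμ` if their difference is a
constant vector, and `(q-1)μ` otherwise; in particular `C` is a two-weight
`(qμ, q²μ, {(q-1)μ, qμ})_q`-code. -/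
theorem difference_matrix_code
    {G : Type*} [AddCommGroup G] [Fintype G] [DecidableEq G] {q μ : ℕ}
    (hq : Fintype.card G = q) (hq2 : 2 ≤ q) (hμ : 1 ≤ μ)
    (D : Fin (q * μ) → Fin (q * μ) → G)
    (hD : ∀ i j : Fin (q * μ), i ≠ j → ∀ g : G,
      Nat.card {k : Fin (q * μ) | D i k - D j k = g} = μ)
    (C : Set (Fin (q * μ) → G))
    (hC : C = {x : Fin (q * μ) → G | ∃ i g, x = fun k => D i k + g}) :
    Nat.card C = q ^ 2 * μ ∧
      ∀ x ∈ C, ∀ y ∈ C, x ≠ y →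
        ((∃ g : G, ∀ k, x k - y k = g) → hammingDist x y = q * μ) ∧
        (¬ (∃ g : G, ∀ k, x k - y k = g) → hammingDist x y = (q - 1) * μ) := by
  have hqμ : 2 * μ ≤ q * μ := Nat.mul_le_mul_right μ hq2
  have key : ∀ i j : Fin (q * μ), i ≠ j → ∀ g : G,
      (Finset.univ.filter fun k => D i k - D j k = g).card = μ := by
    intro i j hij g
    have h := hD i j hij g
    rwa [Nat.card_eq_fintype_card, Fintype.card_subtype] at h
  -- injectivity of the parametrization
  have hf : Function.Injective
      (fun p : Fin (q * μ) × G => fun k => D p.1 k + p.2) := by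
    rintro ⟨i, g⟩ ⟨j, h⟩ hij
    simp only at hij
    by_cases hij' : i = j
    · subst hij'
      have h0 : (0 : ℕ) < q * μ := by omega
      have := congrFun hij ⟨0, h0⟩
      have : g = h := add_left_cancel this
      simp [this]
    · exfalso
      have hall : ∀ k, D i k - D j k = h - g := fun k =>
        (dm_aux _ _ _ _).1 (congrFun hij k)
      have h1 := key i j hij' (h - g)
      rw [Finset.filter_true_of_mem (fun k _ => hall k), Finset.card_univ,
        Fintype.card_fin] at h1
      omega
  have hCr : C = Set.range (fun p : Fin (q * μ) × G => fun k => D p.1 k + p.2) := by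
    rw [hC]
    ext x
    simp only [Set.mem_setOf_eq, Set.mem_range, Prod.exists]
    constructor
    · rintro ⟨i, g, rfl⟩; exact ⟨i, g, rfl⟩
    · rintro ⟨i, g, rfl⟩; exact ⟨i, g, rfl⟩
  constructor
  · rw [hCr, Nat.card_range_of_injective hf, Nat.card_eq_fintype_card,
      Fintype.card_prod, Fintype.card_fin, hq]
    ring
  · intro x hx y hy hxy
    rw [hC] at hx hy
    obtain ⟨i, g₁, rfl⟩ := hx
    obtain ⟨j, g₂, rfl⟩ := hy
    constructor
    · rintro ⟨g, hg⟩
      have hg0 : g ≠ 0 := by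
        rintro rfl
        exact hxy (funext fun k => sub_eq_zero.1 (hg k))
      have hne : ∀ k : Fin (q * μ),
          D i k + g₁ ≠ D j k + g₂ := by
        intro k hk
        exact hg0 (by rw [← hg k]; simp [hk])
      simp only [hammingDist]
      rw [Finset.filter_true_of_mem (fun k _ => hne k), Finset.card_univ,
        Fintype.card_fin]
    · intro hnc
      have hij : i ≠ j := by
        rintro rfl
        exact hnc ⟨g₁ - g₂, fun k => by dsimp only; abel⟩
      have heq : (Finset.univ.filter fun k =>
          ¬ (D i k - D j k = g₂ - g₁)).card
          = q * μ - μ := by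
        have h1 := key i j hij (g₂ - g₁)
        have h2 := Finset.card_filter_add_card_filter_not
          (s := (Finset.univ : Finset (Fin (q * μ))))
          (p := fun k => D i k - D j k = g₂ - g₁)
        rw [Finset.card_univ, Fintype.card_fin] at h2
        omega
      have hfe : (Finset.univ.filter fun k =>
          (fun k => D i k + g₁) k ≠ (fun k => D j k + g₂) k)
          = (Finset.univ.filter fun k => ¬ (D i k - D j k = g₂ - g₁)) := by
        apply Finset.filter_congr
        intro k _
        simp only [ne_eq, dm_aux (D i k) (D j k) g₁ g₂]
      simp only [hammingDist]
      rw [hfe, heq, Nat.sub_mul, one_mul]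
end

section
/- Let p be a prime, q = p^m, and let F be a finite field with q elements. Let C be a linear code in F^n that is projective (every nonzero codeword of the dual code C^⊥ has Hamming weight at least 3) and two-weight with weights w and n: every nonzero codeword of C has Hamming weight w or n, both values w < n are attained. Then there exist integers u ≥ 0 and h ≥ 1 such that w = h·p^u and n = (h+1)·p^u. -/
open scoped BigOperators

set_option maxHeartbeats 2000000
set_option synthInstance.maxHeartbeats 400000

section helpers
variable {F M : Type*} [Field F] [AddCommGroup M] [Module F M]

lemma my_card_ker_mul_card {W : Type*} [AddCommGroup W] [Module F W]
    (f : M →ₗ[F] W) (hf : Function.Surjective f) :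
    Nat.card (LinearMap.ker f) * Nat.card W = Nat.card M := by
  rw [Submodule.card_eq_card_quotient_mul_card (LinearMap.ker f)]
  congr 1
  exact Nat.card_congr (f.quotKerEquivOfSurjective hf).toEquiv.symm

lemma my_card_pow [Fintype F] [Finite M] : ∃ k, Nat.card M = Fintype.card F ^ k := by
  have : Fintype M := Fintype.ofFinite M
  exact ⟨Module.finrank F M, by rw [Nat.card_eq_fintype_card]; exact Module.card_eq_pow_finrank⟩

lemma my_surj (f : M →ₗ[F] F) (hne : ∃ x, f x ≠ 0) : Function.Surjective f := by
  rw [← LinearMap.range_eq_top]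
  rcases Ideal.eq_bot_or_top (LinearMap.range f) with h | h
  · obtain ⟨x, hx⟩ := hne
    exact absurd ((Submodule.eq_bot_iff _).mp h (f x) ⟨x, rfl⟩) hx
  · exact h

lemma my_pair_surj (f g : M →ₗ[F] F)
    (H : ∀ a b : F, ¬(a = 0 ∧ b = 0) → ∃ x, a * f x + b * g x ≠ 0) :
    Function.Surjective (f.prod g) := by
  have hfs : Function.Surjective f := by
    apply my_surj
    obtain ⟨x, hx⟩ := H 1 0 (by simp)
    exact ⟨x, by simpa using hx⟩
  have hz : ∃ z, f z = 0 ∧ g z ≠ 0 := by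
    by_contra hcon
    push_neg at hcon
    obtain ⟨x0, hx0⟩ := hfs 1
    obtain ⟨x, hx⟩ := H (g x0) (-1) (by simp)
    apply hx
    have h1 : f (x - f x • x0) = 0 := by simp [hx0, mul_comm]
    have h2 := hcon _ h1
    simp only [map_sub, map_smul, smul_eq_mul] at h2
    have h3 : g x = f x * g x0 := by linear_combination h2
    rw [h3]; ring
  obtain ⟨z, hz1, hz2⟩ := hz
  obtain ⟨x0, hx0⟩ := hfs 1
  intro st
  refine ⟨st.1 • x0 + ((st.2 - st.1 * g x0) * (g z)⁻¹) • z, ?_⟩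
  have hfv : f (st.1 • x0 + ((st.2 - st.1 * g x0) * (g z)⁻¹) • z) = st.1 := by
    simp [hx0, hz1]
  have hgv : g (st.1 • x0 + ((st.2 - st.1 * g x0) * (g z)⁻¹) • z) = st.2 := by
    simp only [map_add, map_smul, smul_eq_mul]
    field_simp
    ring
  ext
  · simpa using hfv
  · simpa using hgv

end helpers

lemma proj_pair {F : Type*} [Field F] [Fintype F] [DecidableEq F] {n : ℕ}
    (C : Submodule F (Fin n → F))
    (hproj : ∀ y ∈ dualCode C, y ≠ 0 → 3 ≤ hammingNorm y)
    {i j : Fin n} (hij : i ≠ j) (a b : F) (hab : ¬(a = 0 ∧ b = 0)) :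
    ∃ c ∈ C, a * c i + b * c j ≠ 0 := by
  by_contra hcon
  push_neg at hcon
  set y : Fin n → F := Pi.single i a + Pi.single j b with hy
  have hyi : y i = a := by simp [hy, Pi.single_eq_of_ne hij]
  have hyj : y j = b := by simp [hy, Pi.single_eq_of_ne hij.symm]
  have hyk : ∀ k, k ≠ i → k ≠ j → y k = 0 := by
    intro k hki hkj
    simp [hy, Pi.single_eq_of_ne hki, Pi.single_eq_of_ne hkj]
  have hymem : y ∈ dualCode C := by
    intro x hx
    have : ∀ k, x k * y k = (if k = i then x i * a else 0) + (if k = j then x j * b else 0) := by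
      intro k
      by_cases hki : k = i
      · subst hki; simp [hyi, if_neg hij]
      · by_cases hkj : k = j
        · subst hkj; simp [hyj, if_neg hki]
        · simp [hyk k hki hkj, hki, hkj]
    rw [Finset.sum_congr rfl (fun k _ => this k)]
    rw [Finset.sum_add_distrib, Finset.sum_ite_eq' , Finset.sum_ite_eq']
    simp only [Finset.mem_univ, if_true]
    linear_combination hcon x hx
  have hyne : y ≠ 0 := by
    rcases not_and_or.mp hab with ha | hb
    · intro h0; exact ha (by rw [← hyi, h0]; rfl)
    · intro h0; exact hb (by rw [← hyj, h0]; rfl)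
  have h3 := hproj y hymem hyne
  have hle : hammingNorm y ≤ 2 := by
    have hsub : ({k | y k ≠ 0} : Finset (Fin n)) ⊆ {i, j} := by
      intro k hk
      simp only [Finset.mem_filter, Finset.mem_univ, true_and] at hk
      by_contra hk2
      simp only [Finset.mem_insert, Finset.mem_singleton] at hk2
      push_neg at hk2
      exact hk (hyk k hk2.1 hk2.2)
    calc hammingNorm y ≤ ({i, j} : Finset (Fin n)).card := Finset.card_le_card hsub
    _ ≤ 2 := Finset.card_insert_le _ _ |>.trans (by simp)
  omega

/-- Delsarte: if `C` is a projective two-weight `[n, k, {w, n}]_q`-code over a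
field of characteristic `p`, then there are integers `u ≥ 0`, `h ≥ 1` with
`w = h·p^u` and `n = (h+1)·p^u`. -/
theorem projective_two_weight_antipodal_weights
    {p m q n w : ℕ} (hp : p.Prime) (hqpm : q = p ^ m)
    {F : Type*} [Field F] [Fintype F] [DecidableEq F]
    (hcard : Fintype.card F = q)
    (C : Submodule F (Fin n → F))
    (hproj : ∀ y ∈ dualCode C, y ≠ 0 → 3 ≤ hammingNorm y)
    (hweights : ∀ x ∈ C, x ≠ 0 → hammingNorm x = w ∨ hammingNorm x = n)
    (hw_att : ∃ x ∈ C, x ≠ 0 ∧ hammingNorm x = w)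
    (hn_att : ∃ x ∈ C, x ≠ 0 ∧ hammingNorm x = n)
    (hwn : w < n) :
    ∃ u h : ℕ, 1 ≤ h ∧ w = h * p ^ u ∧ n = (h + 1) * p ^ u := by
  classical
  -- basic facts
  have hq2 : 2 ≤ q := hcard ▸ Fintype.one_lt_card
  have hw1 : 1 ≤ w := by
    obtain ⟨x, _, hx0, hxw⟩ := hw_att
    have := hammingNorm_pos_iff.mpr hx0
    omega
  have hn2 : 2  ≤ n := by omega
  set d : ℕ := n - w with hd_def
  have hd1 : 1 ≤ d := by omega
  have hnwd : n = w + d := by omega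
  -- full-support criterion
  have hfull : ∀ x : Fin n → F, hammingNorm x = n → ∀ i, x i ≠ 0 := by
    intro x hx i
    have huniv : ({j | x j ≠ 0} : Finset (Fin n)) = Finset.univ := by
      apply Finset.eq_univ_of_card
      rw [Fintype.card_fin]; exact hx
    have hi : i ∈ ({j | x j ≠ 0} : Finset (Fin n)) := by
      rw [huniv]; exact Finset.mem_univ i
    simpa using hi
  -- two distinguished coordinates
  have h0n : 0 < n := by omega
  have h1n : 1 < n := by omega
  set i0 : Fin n := ⟨0, h0n⟩
  set i1 : Fin n := ⟨1, h1n⟩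
  have hi01 : i0 ≠ i1 := by simp [i0, i1, Fin.ext_iff]
  -- coordinate functionals
  set φ : Fin n → (↥C →ₗ[F] F) := fun i => (LinearMap.proj i).comp C.subtype with hφ
  have hφ_apply : ∀ (i) (c : ↥C), φ i c = (c : Fin n → F) i := fun _ _ => rfl
  have hpair : ∀ i j : Fin n, i ≠ j → Function.Surjective ((φ i).prod (φ j)) := by
    intro i j hij
    apply my_pair_surj
    intro a b hab
    obtain ⟨c, hc, hne⟩ := proj_pair C hproj hij a b hab
    exact ⟨⟨c, hc⟩, hne⟩
  have hsurj : ∀ i : Fin n, Function.Surjective (φ i) := by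
    intro i
    apply my_surj
    rcases eq_or_ne i i0 with rfl | hne
    · obtain ⟨c, hc, hne⟩ := proj_pair C hproj hi01 1 0 (by simp)
      exact ⟨⟨c, hc⟩, by simpa [hφ_apply] using hne⟩
    · obtain ⟨c, hc, hne⟩ := proj_pair C hproj hne 1 0 (by simp)
      exact ⟨⟨c, hc⟩, by simpa [hφ_apply] using hne⟩
  -- cardinalities
  have fC : Fintype ↥C := Fintype.ofFinite _
  set N : ℕ := Nat.card ↥C with hN
  have hqF : Nat.card F = q := by rw [Nat.card_eq_fintype_card, hcard]
  have hker1 : ∀ i, Nat.card (LinearMap.ker (φ i)) * q = N := by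
    intro i; rw [← hqF]; exact my_card_ker_mul_card _ (hsurj i)
  have hker2 : ∀ i j, i ≠ j →
      Nat.card (LinearMap.ker ((φ i).prod (φ j))) * (q * q) = N := by
    intro i j hij
    have h := my_card_ker_mul_card _ (hpair i j hij)
    rwa [Nat.card_prod, hqF] at h
  set P : ℕ := Nat.card (LinearMap.ker ((φ i0).prod (φ i1))) with hPdef
  have hPN : P * (q * q) = N := hker2 _ _ hi01
  obtain ⟨kP, hkP⟩ : ∃ k, P = q ^ k := by
    obtain ⟨k, hk⟩ := my_card_pow (F := F) (M := ↥(LinearMap.ker ((φ i0).prod (φ i1))))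
    exact ⟨k, by rw [hPdef, hk, hcard]⟩
  have hP1 : 1 ≤ P := Nat.card_pos
  -- filter versions of kernel counts
  have hZ1 : ∀ i : Fin n,
      (Finset.univ.filter fun c : ↥C => (c : Fin n → F) i = 0).card * q = N := by
    intro i
    have hc : Nat.card (LinearMap.ker (φ i))
        = (Finset.univ.filter fun c : ↥C => (c : Fin n → F) i = 0).card := by
      rw [Nat.card_eq_fintype_card, ← Fintype.card_subtype]
      apply Fintype.card_congr
      exact Equiv.subtypeEquivRight (fun c => by simp [LinearMap.mem_ker, hφ_apply])
    rw [← hc]; exact hker1 i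
  have hZ2 : ∀ i j : Fin n, i ≠ j →
      (Finset.univ.filter fun c : ↥C => (c : Fin n → F) i = 0 ∧ (c : Fin n → F) j = 0).card * (q * q) = N := by
    intro i j hij
    have hc : Nat.card (LinearMap.ker ((φ i).prod (φ j)))
        = (Finset.univ.filter fun c : ↥C => (c : Fin n → F) i = 0 ∧ (c : Fin n → F) j = 0).card := by
      rw [Nat.card_eq_fintype_card, ← Fintype.card_subtype]
      apply Fintype.card_congr
      refine Equiv.subtypeEquivRight (fun c => ?_)
      simp [LinearMap.mem_ker, LinearMap.prod_apply, Prod.ext_iff, hφ_apply]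
    rw [← hc]; exact hker2 i j hij
  -- number of weight-w codewords
  set Aw : ℕ := (Finset.univ.filter fun c : ↥C => hammingNorm (c : Fin n → F) = w).card with hAwdef
  have hzero_card : ∀ x : Fin n → F,
      ({i | x i = 0} : Finset (Fin n)).card = n - hammingNorm x := by
    intro x
    have h1 := Finset.card_filter_add_card_filter_not
      (s := (Finset.univ : Finset (Fin n))) (p := fun i => x i ≠ 0)
    have h2 : (Finset.univ.filter fun i : Fin n => ¬ (x i ≠ 0))
        = ({i | x i = 0} : Finset (Fin n)) :=
      Finset.filter_congr (fun i _ => by simp)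
    have h3 : hammingNorm x = (Finset.univ.filter fun i : Fin n => x i ≠ 0).card := rfl
    rw [h2] at h1
    simp only [Finset.card_univ, Fintype.card_fin] at h1
    omega
  have hcoe_ne : ∀ c : ↥C, c ≠ 0 → (c : Fin n → F) ≠ 0 := by
    intro c hc
    simpa [ZeroMemClass.coe_eq_zero] using hc
  have hsplit : ∑ c : ↥C, (n - hammingNorm (c : Fin n → F)) = n + Aw * d := by
    rw [← Finset.sum_filter_add_sum_filter_not Finset.univ
      (fun c : ↥C => hammingNorm (c : Fin n → F) = w)]
    have hA : ∑ c ∈ Finset.univ.filter (fun c : ↥C => hammingNorm (c : Fin n → F) = w),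
        (n - hammingNorm (c : Fin n → F)) = Aw * d := by
      rw [Finset.sum_congr rfl (g := fun _ => d) (fun c hc => by
        rw [(Finset.mem_filter.mp hc).2]), Finset.sum_const, smul_eq_mul]
    have hB : ∑ c ∈ Finset.univ.filter (fun c : ↥C => ¬ hammingNorm (c : Fin n → F) = w),
        (n - hammingNorm (c : Fin n → F)) = n := by
      rw [Finset.sum_eq_single_of_mem (0 : ↥C)]
      · simp
      · simp only [Finset.mem_filter, Finset.mem_univ, true_and]
        intro hcon
        rw [ZeroMemClass.coe_zero, hammingNorm_zero] at hcon
        omega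
      · intro b hb hb0
        rcases hweights _ b.2 (hcoe_ne b hb0) with h | h
        · exact absurd h (Finset.mem_filter.mp hb).2
        · rw [h]; omega
    rw [hA, hB]; omega
  have hE1 : (n + Aw * d) * q = n * N := by
    have hexp : ∀ c : ↥C, (n - hammingNorm (c : Fin n → F))
        = ∑ i : Fin n, if (c : Fin n → F) i = 0 then 1 else 0 := by
      intro c
      rw [← Finset.card_filter, hzero_card]
    have hsum : ∑ i : Fin n,
        (Finset.univ.filter fun c : ↥C => (c : Fin n → F) i = 0).card
        = n + Aw * d := by
      rw [← hsplit]
      simp_rw [Finset.card_filter]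
      rw [Finset.sum_comm]
      exact Finset.sum_congr rfl fun c _ => (hexp c).symm
    calc (n + Aw * d) * q = ∑ i : Fin n,
          (Finset.univ.filter fun c : ↥C => (c : Fin n → F) i = 0).card * q := by
          rw [← Finset.sum_mul, hsum]
      _ = ∑ _i : Fin n, N := Finset.sum_congr rfl fun i _ => hZ1 i
      _ = n * N := by simp [Finset.card_univ, mul_comm]
  have hoffc : ∀ c : ↥C, (Finset.univ.offDiag.filter
        (fun pr : Fin n × Fin n => (c : Fin n → F) pr.1 = 0 ∧ (c : Fin n → F) pr.2 = 0))
      = ({i | (c : Fin n → F) i = 0} : Finset (Fin n)).offDiag := by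
    intro c
    ext pr
    simp only [Finset.mem_filter, Finset.mem_offDiag, Finset.mem_univ, true_and]
    tauto
  have hsplit2 : ∑ c : ↥C, ((n - hammingNorm (c : Fin n → F)) * (n - hammingNorm (c : Fin n → F))
        - (n - hammingNorm (c : Fin n → F))) = (n * n - n) + Aw * (d * d - d) := by
    rw [← Finset.sum_filter_add_sum_filter_not Finset.univ
      (fun c : ↥C => hammingNorm (c : Fin n → F) = w)]
    have hA : ∑ c ∈ Finset.univ.filter (fun c : ↥C => hammingNorm (c : Fin n → F) = w),
        ((n - hammingNorm (c : Fin n → F)) * (n - hammingNorm (c : Fin n → F))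
          - (n - hammingNorm (c : Fin n → F))) = Aw * (d * d - d) := by
      rw [Finset.sum_congr rfl (g := fun _ => d * d - d) (fun c hc => by
        rw [(Finset.mem_filter.mp hc).2]), Finset.sum_const, smul_eq_mul]
    have hB : ∑ c ∈ Finset.univ.filter (fun c : ↥C => ¬ hammingNorm (c : Fin n → F) = w),
        ((n - hammingNorm (c : Fin n → F)) * (n - hammingNorm (c : Fin n → F))
          - (n - hammingNorm (c : Fin n → F))) = n * n - n := by
      rw [Finset.sum_eq_single_of_mem (0 : ↥C)]
      · simp
      · simp only [Finset.mem_filter, Finset.mem_univ, true_and]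
        intro hcon
        rw [ZeroMemClass.coe_zero, hammingNorm_zero] at hcon
        omega
      · intro b hb hb0
        rcases hweights _ b.2 (hcoe_ne b hb0) with h | h
        · exact absurd h (Finset.mem_filter.mp hb).2
        · rw [h]; simp
    rw [hA, hB]; omega
  have hE2 : ((n * n - n) + Aw * (d * d - d)) * (q * q) = (n * n - n) * N := by
    have hsum : ∑ pr ∈ (Finset.univ : Finset (Fin n)).offDiag,
        (Finset.univ.filter fun c : ↥C =>
          (c : Fin n → F) pr.1 = 0 ∧ (c : Fin n → F) pr.2 = 0).card
        = (n * n - n) + Aw * (d * d - d) := by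
      rw [← hsplit2]
      simp_rw [Finset.card_filter]
      rw [Finset.sum_comm]
      refine Finset.sum_congr rfl fun c _ => ?_
      rw [← Finset.card_filter, hoffc c, Finset.offDiag_card, hzero_card]
    calc ((n * n - n) + Aw * (d * d - d)) * (q * q)
        = ∑ pr ∈ (Finset.univ : Finset (Fin n)).offDiag,
          (Finset.univ.filter fun c : ↥C =>
            (c : Fin n → F) pr.1 = 0 ∧ (c : Fin n → F) pr.2 = 0).card * (q * q) := by
          rw [← Finset.sum_mul, hsum]
      _ = ∑ _pr ∈ (Finset.univ : Finset (Fin n)).offDiag, N :=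
          Finset.sum_congr rfl fun pr hpr => hZ2 pr.1 pr.2 (Finset.mem_offDiag.mp hpr).2.2
      _ = (n * n - n) * N := by
          rw [Finset.sum_const, smul_eq_mul, Finset.offDiag_card]
          simp [Finset.card_univ]
  -- fiber argument: d ∣ n with quotient between 2 and q
  obtain ⟨x, hxC, hx0, hxn⟩ := hn_att
  have hxfull := hfull x hxn
  obtain ⟨y', hy'⟩ := hpair i0 i1 hi01 (x i0, 0)
  set y : Fin n → F := (y' : Fin n → F) with hydef
  have hyC : y ∈ C := y'.2
  have hyi0 : y i0 = x i0 := congrArg Prod.fst hy'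
  have hyi1 : y i1 = 0 := congrArg Prod.snd hy'
  have hyne : ∀ lam : F, y - lam • x ≠ 0 := by
    intro lam h0
    have h := sub_eq_zero.mp h0
    have e0 : x i0 = lam * x i0 := by
      conv_lhs => rw [← hyi0, h]
      simp
    have hlam : lam = 1 := by
      have h2 : (1 - lam) * x i0 = 0 := by linear_combination e0
      rcases mul_eq_zero.mp h2 with h3 | h3
      · exact (sub_eq_zero.mp h3).symm
      · exact absurd h3 (hxfull i0)
    have e1 : (0 : F) = lam * x i1 := by
      conv_lhs => rw [← hyi1, h]
      simp
    rw [hlam, one_mul] at e1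
    exact hxfull i1 e1.symm
  set nl : F → ℕ := fun lam => (Finset.univ.filter fun i => y i = lam * x i).card with hnldef
  have hnl_sum : ∑ lam : F, nl lam = n := by
    have base : (Finset.univ : Finset (Fin n)).card
        = ∑ lam : F, (Finset.univ.filter fun i => y i * (x i)⁻¹ = lam).card :=
      Finset.card_eq_sum_card_fiberwise (fun i _ => Finset.mem_univ _)
    rw [Finset.card_univ, Fintype.card_fin] at base
    calc ∑ lam : F, nl lam
        = ∑ lam : F, (Finset.univ.filter fun i => y i * (x i)⁻¹ = lam).card := by
          refine Finset.sum_congr rfl fun lam _ => ?_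
          show (Finset.univ.filter fun i : Fin n => y i = lam * x i).card = _
          congr 1
          apply Finset.filter_congr
          intro i _
          exact (mul_inv_eq_iff_eq_mul₀ (hxfull i)).symm
      _ = n := base.symm
  have hnl_mem : ∀ lam : F, nl lam = 0 ∨ nl lam = d := by
    intro lam
    have hmem : y - lam • x ∈ C := C.sub_mem hyC (C.smul_mem lam hxC)
    have hpart := Finset.card_filter_add_card_filter_not
      (s := (Finset.univ : Finset (Fin n))) (p := fun i => (y - lam • x) i ≠ 0)
    have hneg : (Finset.univ.filter fun i : Fin n => ¬ (y - lam • x) i ≠ 0)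
        = (Finset.univ.filter fun i => y i = lam * x i) :=
      Finset.filter_congr (fun i _ => by simp [sub_eq_zero])
    have hhn : hammingNorm (y - lam • x)
        = (Finset.univ.filter fun i : Fin n => (y - lam • x) i ≠ 0).card := rfl
    rw [hneg] at hpart
    simp only [Finset.card_univ, Fintype.card_fin] at hpart
    have hnle : (Finset.univ.filter fun i : Fin n => y i = lam * x i).card ≤ n := by
      simpa using Finset.card_filter_le Finset.univ (fun i => y i = lam * x i)
    have hnl_eq : nl lam = (Finset.univ.filter fun i : Fin n => y i = lam * x i).card := rfl
    rw [← hhn] at hpart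
    rw [hnl_eq]
    rcases hweights _ hmem (hyne lam) with h | h
    · right; omega
    · left; omega
  set kk : ℕ := (Finset.univ.filter fun lam : F => nl lam = d).card with hkkdef
  have hn_dk : n = d * kk := by
    rw [← hnl_sum, ← Finset.sum_filter_add_sum_filter_not Finset.univ (fun lam : F => nl lam = d)]
    have hA : ∑ lam ∈ Finset.univ.filter (fun lam : F => nl lam = d), nl lam = d * kk := by
      rw [Finset.sum_congr rfl (g := fun _ => d) (fun lam hl => (Finset.mem_filter.mp hl).2),
        Finset.sum_const, smul_eq_mul, mul_comm]
    have hB : ∑ lam ∈ Finset.univ.filter (fun lam : F => ¬ nl lam = d), nl lam = 0 := by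
      refine Finset.sum_eq_zero fun lam hl => ?_
      rcases hnl_mem lam with h | h
      · exact h
      · exact absurd h (Finset.mem_filter.mp hl).2
    rw [hA, hB]; omega
  have hkk_le : kk ≤ q := by
    rw [hkkdef, ← hcard, ← Finset.card_univ]
    exact Finset.card_filter_le _ _
  have hkk2 : 2 ≤ kk := by
    rcases Nat.lt_or_ge kk 2 with hlt | hge
    · interval_cases kk <;> omega
    · exact hge
  set hh : ℕ := kk - 1 with hhdef
  have hh1 : 1 ≤ hh := by omega
  have hn_eq : n = (hh + 1) * d := by
    have hk1 : hh + 1 = kk := by omega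
    rw [hn_dk, hk1, mul_comm]
  have hw_eq : w = hh * d := by
    have hx2 : n = hh * d + d := by rw [hn_eq]; ring
    omega
  have hhq : hh + 1 ≤ q := by omega
  -- Bonisoli-lite: P divides w
  set D : Submodule F ↥C := LinearMap.ker (φ i0) with hDdef
  have fD : Fintype ↥D := Fintype.ofFinite _
  have hDcard : Nat.card ↥D = P * q := by
    have h1 : Nat.card ↥D * q = N := hker1 i0
    have h2 : P * q * q = N := by rw [← hPN]; ring
    have hq0 : 0 < q := by omega
    exact Nat.eq_of_mul_eq_mul_right hq0 (h1.trans h2.symm)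
  set ψ : Fin n → (↥D →ₗ[F] F) := fun i => (φ i).comp D.subtype with hψdef
  have hψ_apply : ∀ (i) (c : ↥D), ψ i c = ((c : ↥C) : Fin n → F) i := fun _ _ => rfl
  set T : Fin n → ℕ := fun i =>
    (Finset.univ.filter fun c : ↥D => ((c : ↥C) : Fin n → F) i ≠ 0).card with hTdef
  have hTval : ∀ i, T i = 0 ∨ T i = P * (q - 1) := by
    intro i
    rcases Ideal.eq_bot_or_top (LinearMap.range (ψ i)) with hbot | htop
    · left
      rw [hTdef]
      simp only
      rw [Finset.card_eq_zero, Finset.filter_eq_empty_iff]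
      intro c _
      have : ψ i c ∈ LinearMap.range (ψ i) := ⟨c, rfl⟩
      rw [hbot] at this
      exact fun h => h ((Submodule.mem_bot F).mp this)
    · right
      have hsurjD : Function.Surjective (ψ i) := LinearMap.range_eq_top.mp htop
      have hkc : Nat.card (LinearMap.ker (ψ i)) * q = P * q := by
        have h5 : Nat.card (LinearMap.ker (ψ i)) * Nat.card F = Nat.card ↥D :=
          @my_card_ker_mul_card F ↥D _ (Module.addCommMonoidToAddCommGroup F) _ F _ _ (ψ i) hsurjD
        rw [hqF, hDcard] at h5
        exact h5
      have hker_card : Nat.card (LinearMap.ker (ψ i)) = P :=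
        Nat.eq_of_mul_eq_mul_right (by omega) hkc
      have hzero : (Finset.univ.filter fun c : ↥D => ((c : ↥C) : Fin n → F) i = 0).card = P := by
        rw [← hker_card, Nat.card_eq_fintype_card, ← Fintype.card_subtype]
        apply Fintype.card_congr
        exact Equiv.subtypeEquivRight (fun c => by
          rw [LinearMap.mem_ker, hψ_apply])
      have hpart := Finset.card_filter_add_card_filter_not
        (s := (Finset.univ : Finset ↥D))
        (p := fun c : ↥D => ((c : ↥C) : Fin n → F) i = 0)
      have hneg : (Finset.univ.filter fun c : ↥D => ¬ ((c : ↥C) : Fin n → F) i = 0)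
          = (Finset.univ.filter fun c : ↥D => ((c : ↥C) : Fin n → F) i ≠ 0) := rfl
      rw [hneg, hzero] at hpart
      have hcu : (Finset.univ : Finset ↥D).card = P * q := by
        rw [Finset.card_univ, ← Nat.card_eq_fintype_card, hDcard]
      rw [hcu] at hpart
      have hps : P * (q - 1) + P = P * q := by
        have hq1 : q - 1 + 1 = q := by omega
        calc P * (q - 1) + P = P * ((q - 1) + 1) := by ring
          _ = P * q := by rw [hq1]
      have hTi : T i = (Finset.univ.filter
          fun c : ↥D => ((c : ↥C) : Fin n → F) i ≠ 0).card := rfl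
      omega
  have hDsum1 : ∑ c : ↥D, hammingNorm ((c : ↥C) : Fin n → F) = ∑ i : Fin n, T i := by
    have hnormexp : ∀ c : ↥D, hammingNorm ((c : ↥C) : Fin n → F)
        = ∑ i : Fin n, if ((c : ↥C) : Fin n → F) i ≠ 0 then 1 else 0 := by
      intro c; rw [← Finset.card_filter]; rfl
    rw [Finset.sum_congr rfl fun c _ => hnormexp c, Finset.sum_comm]
    exact Finset.sum_congr rfl fun i _ => (Finset.card_filter _ _).symm
  have hDsum2 : ∑ c : ↥D, hammingNorm ((c : ↥C) : Fin n → F) = w * (P * q - 1) := by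
    rw [← Finset.add_sum_erase _ _ (Finset.mem_univ (0 : ↥D))]
    have h0 : hammingNorm (((0 : ↥D) : ↥C) : Fin n → F) = 0 := by simp
    rw [h0, zero_add]
    have hes : ∀ c ∈ Finset.univ.erase (0 : ↥D),
        hammingNorm ((c : ↥C) : Fin n → F) = w := by
      intro c hc
      have hc0 : c ≠ 0 := (Finset.mem_erase.mp hc).1
      have hcC0 : ((c : ↥C) : Fin n → F) ≠ 0 := by
        simp only [ne_eq, ZeroMemClass.coe_eq_zero]
        exact hc0
      rcases hweights _ (c : ↥C).2 hcC0 with h | h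
      · exact h
      · exfalso
        have hker : ((c : ↥C) : Fin n → F) i0 = 0 := LinearMap.mem_ker.mp c.2
        exact hfull _ h i0 hker
    rw [Finset.sum_congr rfl hes, Finset.sum_const, smul_eq_mul,
      Finset.card_erase_of_mem (Finset.mem_univ _), Finset.card_univ,
      ← Nat.card_eq_fintype_card, hDcard, mul_comm]
  have hPw : P ∣ w := by
    have hTsum : w * (P * q - 1) = ∑ i : Fin n, T i := by rw [← hDsum2, hDsum1]
    have hdvd1 : P * (q - 1) ∣ ∑ i : Fin n, T i := by
      refine Finset.dvd_sum fun i _ => ?_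
      rcases hTval i with h | h
      · rw [h]; exact dvd_zero _
      · rw [h]
    have h1 : P ∣ w * (P * q - 1) :=
      dvd_trans (dvd_mul_right P (q - 1)) (hTsum ▸ hdvd1)
    have hPq1 : 1 ≤ P * q := Nat.mul_pos (by omega) (by omega)
    have hco : Nat.Coprime P (P * q - 1) := by
      have hg1 : Nat.gcd P (P * q - 1) ∣ P * q := (Nat.gcd_dvd_left _ _).mul_right q
      have hg2 := Nat.gcd_dvd_right P (P * q - 1)
      have key : P * q - (P * q - 1) = 1 := by omega
      have hg3 := Nat.dvd_sub hg1 hg2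
      rw [key] at hg3
      exact Nat.dvd_one.mp hg3
    exact hco.dvd_of_dvd_mul_right h1
  -- final arithmetic
  suffices hdp : ∃ u : ℕ, d = p ^ u by
    obtain ⟨u, hu⟩ := hdp
    exact ⟨u, hh, hh1, by rw [hw_eq, hu], by rw [hn_eq, hu]⟩
  have hq0 : (q : ℤ) ≠ 0 := by exact_mod_cast (by omega : q ≠ 0)
  have hd0 : (d : ℤ) ≠ 0 := by exact_mod_cast (by omega : d ≠ 0)
  have hP0 : (P : ℤ) ≠ 0 := by exact_mod_cast (by omega : P ≠ 0)
  have hh0 : ((hh : ℤ) + 1) ≠ 0 := by positivity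
  -- E1 over ℤ, with N eliminated
  have hE1' : (n + Aw * d) * q = n * (P * (q * q)) := by rw [hPN]; exact hE1
  have e1' : ((n : ℤ) + Aw * d) * q = n * (P * (q * q)) := by exact_mod_cast hE1'
  have e1 : (n : ℤ) + Aw * d = n * P * q := by
    apply mul_right_cancel₀ hq0
    linear_combination e1'
  have hE2' : ((n * n - n) + Aw * (d * d - d)) * (q * q) = (n * n - n) * (P * (q * q)) := by
    rw [hPN]; exact hE2
  have hnn : ((n * n - n : ℕ) : ℤ) = (n : ℤ) * n - n := by
    have : n ≤ n * n := Nat.le_mul_of_pos_left n h0n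
    push_cast [this]; ring
  have hdd : ((d * d - d : ℕ) : ℤ) = (d : ℤ) * d - d := by
    have : d ≤ d * d := Nat.le_mul_of_pos_left d (by omega)
    push_cast [this]; ring
  have e2' : (((n : ℤ) * n - n) + Aw * ((d : ℤ) * d - d)) * (q * q)
      = ((n : ℤ) * n - n) * (P * (q * q)) := by
    have := hE2'
    have hc : (((n * n - n : ℕ) : ℤ) + (Aw : ℤ) * ((d * d - d : ℕ) : ℤ)) * ((q : ℤ) * q)
        = ((n * n - n : ℕ) : ℤ) * ((P : ℤ) * ((q : ℤ) * q)) := by exact_mod_cast this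
    rw [hnn, hdd] at hc
    exact hc
  have e2 : ((n : ℤ) * n - n) + Aw * ((d : ℤ) * d - d) = ((n : ℤ) * n - n) * P := by
    apply mul_right_cancel₀ (mul_ne_zero hq0 hq0)
    linear_combination e2'
  have hnZ : (n : ℤ) = ((hh : ℤ) + 1) * d := by exact_mod_cast hn_eq
  rw [hnZ] at e1 e2
  have e3 : (Aw : ℤ) = ((hh : ℤ) + 1) * (P * q - 1) := by
    apply mul_right_cancel₀ hd0
    linear_combination e1
  rw [e3] at e2
  have EQ : (((hh : ℤ) + 1) * d - 1) * (P - 1) = ((P : ℤ) * q - 1) * (d - 1) := by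
    apply mul_left_cancel₀ (mul_ne_zero hh0 hd0)
    linear_combination -e2
  -- introduce S with w = P * S
  set S : ℕ := w / P with hSdef
  have hS : w = P * S := (Nat.mul_div_cancel' hPw).symm
  have hwZ : (w : ℤ) = P * S := by exact_mod_cast hS
  have hwhd : (w : ℤ) = hh * d := by exact_mod_cast hw_eq
  have e6 : (S : ℤ) = ((hh : ℤ) + 1) * d - 1 + q - d * q := by
    apply mul_left_cancel₀ hP0
    linear_combination hwhd - hwZ - EQ
  have hS1 : 1 ≤ S := by
    rcases Nat.eq_zero_or_pos S with h | h
    · rw [h, mul_zero] at hS; omega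
    · exact h
  set t : ℕ := q - 1 - hh with htdef
  have htZ : (t : ℤ) = (q : ℤ) - 1 - hh := by
    have : hh ≤ q - 1 := by omega
    push_cast [htdef]
    omega
  have K1 : (S : ℤ) + d * t = (q : ℤ) - 1 := by
    rw [htZ]; linear_combination e6
  have K1n : S + d * t = q - 1 := by
    have hcast : ((S + d * t : ℕ) : ℤ) = ((q - 1 : ℕ) : ℤ) := by
      push_cast [Nat.cast_sub (by omega : 1 ≤ q)]
      linear_combination K1
    exact_mod_cast hcast
  rcases Nat.eq_zero_or_pos t with ht0 | ht1
  · -- t = 0 : d = P = q ^ kP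
    have hhq1 : hh = q - 1 := by omega
    have hSq1 : S = q - 1 := by
      rw [ht0, mul_zero] at K1n; omega
    have hdP : d = P := by
      have h1 : hh * d = P * S := by rw [← hw_eq, hS]
      rw [hhq1, hSq1] at h1
      have h2 : (q - 1) * d = (q - 1) * P := by rw [h1, mul_comm]
      exact Nat.eq_of_mul_eq_mul_left (by omega) h2
    exact ⟨m * kP, by rw [hdP, hkP, hqpm, ← pow_mul]⟩
  · -- t ≥ 1
    have hdt_le : d * t ≤ q - 2 := by omega
    have hd_le : d ≤ q - 2 := by
      have : d ≤ d * t := Nat.le_mul_of_pos_right d ht1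
      omega
    have hhh_le : hh ≤ q - 2 := by omega
    rcases Nat.lt_or_ge kP 2 with hk2 | hk2
    · interval_cases kP
      · -- P = 1 : d = 1
        have hP1' : P = 1 := by rw [hkP, pow_zero]
        have hwS : w = S := by rw [hS, hP1', one_mul]
        have h1 : hh * d + d * t = hh + t := by omega
        have hde : d * (hh + t) = hh + t := by
          rw [mul_add, mul_comm d hh]; omega
        have hd1' : d = 1 :=
          Nat.eq_of_mul_eq_mul_right (by omega : 0 < hh + t) (by rw [hde, one_mul])
        exact ⟨0, by rw [hd1', pow_zero]⟩
      · -- P = q : d ∣ q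
        have hPq : P = q := by rw [hkP, pow_one]
        have hPqZ : (P : ℤ) = q := by exact_mod_cast hPq
        have hwq : (hh : ℤ) * d = q * S := by
          rw [← hwhd, hwZ, hPqZ]
        have htq : (hh : ℤ) + t = (q : ℤ) - 1 := by omega
        have hq1Z : ((q : ℤ) - 1) ≠ 0 := by
          have : (2 : ℤ) ≤ q := by exact_mod_cast hq2
          omega
        have key : (d : ℤ) * (1 + t) = q := by
          apply mul_left_cancel₀ hq1Z
          linear_combination hwq + (q : ℤ) * K1 - (d : ℤ) * htq
        have keyn : d * (1 + t) = q := by exact_mod_cast key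
        have hdvd : d ∣ q := ⟨1 + t, keyn.symm⟩
        rw [hqpm] at hdvd
        obtain ⟨u, _, hu⟩ := (Nat.dvd_prime_pow hp).mp hdvd
        exact ⟨u, hu⟩
    · -- kP ≥ 2 : contradiction
      exfalso
      have hq2kP : q * q ≤ P := by
        rw [hkP]
        calc q * q = q ^ 2 := by ring
          _ ≤ q ^ kP := Nat.pow_le_pow_right (by omega) hk2
      have hwge : q * q ≤ w := by
        calc q * q ≤ P := hq2kP
          _ ≤ P * S := Nat.le_mul_of_pos_right P hS1
          _ = w := hS.symm
      have hwlt : w < q * q := by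
        rw [hw_eq]
        exact Nat.mul_lt_mul'' (by omega) (by omega)
      omega
end

section
/- Let F be a finite field with q elements and let C be a nontrivial linear two-weight [n,k,{d,n}]_q-code (nonzero codewords have weight set exactly {d,n}, 2 ≤ k ≤ n−2, 3 ≤ d ≤ n−1), with N = q^k and qd − (q−1)(n−1) > 0. Then N·(qd − (q−1)(n−1)) = q²·d holds if and only if the codewords of C form an orthogonal array of strength 2: for every pair of distinct coordinates i ≠ j and every pair (a,b) ∈ F², the number of codewords c ∈ C with c i = a and c j = b equals q^{k−2}. -/
open Finset

section helpers

set_option linter.unusedSectionVars false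

variable {n : ℕ} {F : Type*} [Field F] [Fintype F] [DecidableEq F]

/-- translation bijection for pair fibers -/
lemma twc_pair_translate (C : Submodule F (Fin n → F)) (Cs : Finset (Fin n → F))
    (hmem : ∀ c, c ∈ Cs ↔ c ∈ C) {i j : Fin n} {a b : F} {c₀ : Fin n → F}
    (h0 : c₀ ∈ Cs) (hia : c₀ i = a) (hjb : c₀ j = b) :
    (Cs.filter fun c => c i = a ∧ c j = b).card
      = (Cs.filter fun c => c i = 0 ∧ c j = 0).card := by
  apply Finset.card_nbij' (fun c => c - c₀) (fun c => c + c₀)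
  · intro c hc
    simp only [Finset.mem_coe, mem_filter] at hc ⊢
    refine ⟨(hmem _).2 (sub_mem ((hmem _).1 hc.1) ((hmem _).1 h0)), ?_, ?_⟩ <;>
      simp [hc.2.1, hc.2.2, hia, hjb]
  · intro c hc
    simp only [Finset.mem_coe, mem_filter] at hc ⊢
    refine ⟨(hmem _).2 (add_mem ((hmem _).1 hc.1) ((hmem _).1 h0)), ?_, ?_⟩ <;>
      simp [hc.2.1, hc.2.2, hia, hjb]
  · intro c _; simp
  · intro c _; simp

/-- translation bijection for single-coordinate fibers -/
lemma twc_single_translate (C : Submodule F (Fin n → F)) (Cs : Finset (Fin n → F))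
    (hmem : ∀ c, c ∈ Cs ↔ c ∈ C) {i : Fin n} {a : F} {c₀ : Fin n → F}
    (h0 : c₀ ∈ Cs) (hia : c₀ i = a) :
    (Cs.filter fun c => c i = a).card = (Cs.filter fun c => c i = 0).card := by
  apply Finset.card_nbij' (fun c => c - c₀) (fun c => c + c₀)
  · intro c hc
    simp only [Finset.mem_coe, mem_filter] at hc ⊢
    exact ⟨(hmem _).2 (sub_mem ((hmem _).1 hc.1) ((hmem _).1 h0)), by simp [hc.2, hia]⟩
  · intro c hc
    simp only [Finset.mem_coe, mem_filter] at hc ⊢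
    exact ⟨(hmem _).2 (add_mem ((hmem _).1 hc.1) ((hmem _).1 h0)), by simp [hc.2, hia]⟩
  · intro c _; simp
  · intro c _; simp

end helpers

set_option maxHeartbeats 1000000 in
/-- For a nontrivial linear two-weight `[n, k, {d, n}]_q`-code with
`qd - (q-1)(n-1) > 0`, the bound `N·(qd - (q-1)(n-1)) ≤ q²d` (with `N = q^k`)
is attained with equality if and only if the codewords of `C` form an
orthogonal array of strength 2. -/
theorem two_weight_equality_iff_orthogonal_array
    {q n k d : ℕ}
    {F : Type*} [Field F] [Fintype F] [DecidableEq F]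
    (hcard : Fintype.card F = q)
    (C : Submodule F (Fin n → F))
    (hk : Module.finrank F C = k) (hk2 : 2 ≤ k) (hkn : k ≤ n - 2)
    (hd3 : 3 ≤ d) (hdn : d ≤ n - 1)
    (hweights : ∀ x ∈ C, x ≠ 0 → hammingNorm x = d ∨ hammingNorm x = n)
    (hd_att : ∃ x ∈ C, x ≠ 0 ∧ hammingNorm x = d)
    (hn_att : ∃ x ∈ C, x ≠ 0 ∧ hammingNorm x = n)
    (hpos : 0 < (q : ℤ) * d - ((q : ℤ) - 1) * ((n : ℤ) - 1)) :
    (q : ℤ) ^ k * ((q : ℤ) * d - ((q : ℤ) - 1) * ((n : ℤ) - 1)) =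
        (q : ℤ) ^ 2 * d ↔
      ∀ i j : Fin n, i ≠ j → ∀ a b : F,
        Nat.card {c : Fin n → F | c ∈ C ∧ c i = a ∧ c j = b} = q ^ (k - 2) := by
  classical
  have hq2 : 2 ≤ q := by
    have := Fintype.one_lt_card (α := F)
    omega
  have hdn' : d + 1 ≤ n := by omega
  have hn4 : 4 ≤ n := by omega
  obtain ⟨xn, hxnC, hxn0, hxnw⟩ := hn_att
  have hxni : ∀ i : Fin n, xn i ≠ 0 := by
    intro i
    have hfl : (univ.filter fun i => xn i ≠ 0) = (univ : Finset (Fin n)) := by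
      apply Finset.eq_univ_of_card
      rw [show (univ.filter fun i => xn i ≠ 0).card = hammingNorm xn from rfl, hxnw]
      simp
    have hmi : i ∈ univ.filter fun i => xn i ≠ 0 := by rw [hfl]; exact mem_univ i
    exact (mem_filter.1 hmi).2
  -- the codeword finset
  have hfin : (C : Set (Fin n → F)).Finite := Set.toFinite _
  obtain ⟨Cs, hmem⟩ : ∃ s : Finset (Fin n → F), ∀ c, c ∈ s ↔ c ∈ C :=
    ⟨hfin.toFinset, fun c => hfin.mem_toFinset⟩
  have h0Cs : (0 : Fin n → F) ∈ Cs := (hmem 0).2 (zero_mem C)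
  haveI : Fintype C := Fintype.ofFinite C
  have hNC : Cs.card = q ^ k := by
    have h1 : Fintype.card C = q ^ k := by
      rw [Module.card_eq_pow_finrank (K := F) (V := C), hcard, hk]
    have h2 : Cs = (C : Set (Fin n → F)).toFinset := by
      ext c
      rw [Set.mem_toFinset]
      exact hmem c
    rw [h2, Set.toFinset_card]
    exact h1
  -- number of zero coordinates
  obtain ⟨z, hzdef⟩ : ∃ zz : (Fin n → F) → ℕ,
      zz = fun c => (univ.filter fun i => c i = 0).card := ⟨_, rfl⟩
  have hzwt : ∀ c : Fin n → F, z c + hammingNorm c = n := by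
    intro c
    have := Finset.card_filter_add_card_filter_not (s := univ)
      (p := fun i : Fin n => c i = 0)
    simpa [hammingNorm, hzdef] using this
  -- single-coordinate fibers
  have hsingle : ∀ i : Fin n, (Cs.filter fun c => c i = 0).card * q = q ^ k := by
    intro i
    have hsum : Cs.card = ∑ a : F, (Cs.filter fun c => c i = a).card :=
      Finset.card_eq_sum_card_fiberwise (f := fun c : Fin n → F => c i) (fun x _ => mem_univ _)
    have heach : ∀ a : F, (Cs.filter fun c => c i = a).card
        = (Cs.filter fun c => c i = 0).card := by
      intro a
      refine twc_single_translate C Cs hmem (c₀ := (a * (xn i)⁻¹) • xn)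
        ((hmem _).2 (C.smul_mem _ hxnC)) ?_
      have := hxni i
      rw [Pi.smul_apply, smul_eq_mul]
      field_simp
    have hx : ∑ a : F, (Cs.filter fun c => c i = a).card
        = ∑ _a : F, (Cs.filter fun c => c i = 0).card :=
      Finset.sum_congr rfl fun a _ => heach a
    rw [hx, Finset.sum_const, card_univ, hcard, smul_eq_mul, hNC] at hsum
    rw [mul_comm]
    exact hsum.symm
  -- pair fibers
  have hpairdi : ∀ (i j : Fin n) (a b : F),
      (Cs.filter fun c => c i = a ∧ c j = b).card = 0 ∨
      (Cs.filter fun c => c i = a ∧ c j = b).card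
        = (Cs.filter fun c => c i = 0 ∧ c j = 0).card := by
    intro i j a b
    rcases Finset.eq_empty_or_nonempty (Cs.filter fun c => c i = a ∧ c j = b) with h | h
    · left; simp [h]
    · right
      obtain ⟨c₀, hc₀⟩ := h
      simp only [mem_filter] at hc₀
      exact twc_pair_translate C Cs hmem hc₀.1 hc₀.2.1 hc₀.2.2
  have hpairsum : ∀ i j : Fin n,
      q ^ k = ∑ y : F × F, (Cs.filter fun c => c i = y.1 ∧ c j = y.2).card := by
    intro i j
    rw [← hNC, Finset.card_eq_sum_card_fiberwise (f := fun c => (c i, c j)) (t := univ)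
      (fun x _ => mem_univ _)]
    refine Finset.sum_congr rfl fun y _ => ?_
    congr 1
    ext c
    simp [Prod.ext_iff]
  obtain ⟨B, hBdef⟩ : ∃ BB : Fin n → Fin n → ℕ,
      BB = fun i j => (Cs.filter fun c => c i = 0 ∧ c j = 0).card := ⟨_, rfl⟩
  have hB1 : ∀ i j, 1 ≤ B i j := by
    intro i j
    rw [hBdef]
    refine Finset.card_pos.2 ⟨0, ?_⟩
    simp [mem_filter, h0Cs]
  have hBfib : ∀ (i j : Fin n) (a b : F),
      (Cs.filter fun c => c i = a ∧ c j = b).card = 0 ∨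
      (Cs.filter fun c => c i = a ∧ c j = b).card = B i j := by
    intro i j a b
    rw [hBdef]
    exact hpairdi i j a b
  have hBle : ∀ i j, q ^ k ≤ q ^ 2 * B i j := by
    intro i j
    calc q ^ k = ∑ y : F × F, (Cs.filter fun c => c i = y.1 ∧ c j = y.2).card :=
          hpairsum i j
    _ ≤ ∑ _y : F × F, B i j := by
          refine Finset.sum_le_sum (fun y _ => ?_)
          rcases hBfib i j y.1 y.2 with h | h
          · rw [h]; exact Nat.zero_le _
          · exact le_of_eq h
    _ = q ^ 2 * B i j := by
          simp [Finset.card_univ, hcard, pow_two]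
  -- per-pair equality characterization
  have hpair_eq : ∀ i j : Fin n, q ^ 2 * B i j = q ^ k ↔
      (∀ a b : F, (Cs.filter fun c => c i = a ∧ c j = b).card = q ^ (k - 2)) := by
    intro i j
    have hpow : q ^ k = q ^ 2 * q ^ (k - 2) := by
      rw [← pow_add]
      congr 1
      omega
    constructor
    · intro h a b
      have hBval : B i j = q ^ (k - 2) :=
        Nat.eq_of_mul_eq_mul_left (by positivity) (h.trans hpow)
      have hiff := Finset.sum_eq_sum_iff_of_le
        (s := (univ : Finset (F × F)))
        (f := fun y => (Cs.filter fun c => c i = y.1 ∧ c j = y.2).card)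
        (g := fun _ => B i j)
        (fun y _ => by
          show (Cs.filter fun c => c i = y.1 ∧ c j = y.2).card ≤ B i j
          rcases hBfib i j y.1 y.2 with h' | h'
          · rw [h']; exact Nat.zero_le _
          · exact le_of_eq h')
      have hsums : ∑ y : F × F, (Cs.filter fun c => c i = y.1 ∧ c j = y.2).card
          = ∑ _y : F × F, B i j := by
        rw [← hpairsum i j]
        simp only [Finset.sum_const, card_univ, Fintype.card_prod, hcard, smul_eq_mul]
        rw [← h]
        ring
      have h5 : (Cs.filter fun c => c i = a ∧ c j = b).card = B i j :=
        hiff.1 hsums (a, b) (mem_univ _)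
      rw [h5, hBval]
    · intro h
      have hB00 : B i j = q ^ (k - 2) := by
        rw [hBdef]
        exact h 0 0
      rw [hB00, ← hpow]
  -- bridge to Nat.card statement
  have hbridge : ∀ (i j : Fin n) (a b : F),
      Nat.card {c : Fin n → F | c ∈ C ∧ c i = a ∧ c j = b}
        = (Cs.filter fun c => c i = a ∧ c j = b).card := by
    intro i j a b
    have hset : {c : Fin n → F | c ∈ C ∧ c i = a ∧ c j = b}
        = ↑(Cs.filter fun c => c i = a ∧ c j = b) := by
      ext c
      simp [hmem c, and_assoc]
    rw [hset, Nat.card_coe_set_eq, Set.ncard_coe_finset]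
  -- the big sum S
  obtain ⟨S, hSdef⟩ : ∃ s : ℕ,
      s = ∑ p ∈ (univ : Finset (Fin n)).offDiag, B p.1 p.2 := ⟨_, rfl⟩
  have hSz : S = ∑ c ∈ Cs, (z c * z c - z c) := by
    rw [hSdef, hBdef]
    calc ∑ p ∈ (univ : Finset (Fin n)).offDiag,
          (Cs.filter fun c => c p.1 = 0 ∧ c p.2 = 0).card
        = ∑ p ∈ (univ : Finset (Fin n)).offDiag,
          ∑ c ∈ Cs, (if c p.1 = 0 ∧ c p.2 = 0 then 1 else 0) :=
        Finset.sum_congr rfl fun p _ => Finset.card_filter _ _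
    _ = ∑ c ∈ Cs, ∑ p ∈ (univ : Finset (Fin n)).offDiag,
          (if c p.1 = 0 ∧ c p.2 = 0 then 1 else 0) := Finset.sum_comm
    _ = ∑ c ∈ Cs, (z c * z c - z c) := by
        refine Finset.sum_congr rfl fun c _ => ?_
        rw [← Finset.card_filter]
        have hfe : ((univ : Finset (Fin n)).offDiag.filter
            fun p => c p.1 = 0 ∧ c p.2 = 0) = (univ.filter fun i => c i = 0).offDiag := by
          ext p
          simp only [Finset.mem_filter, Finset.mem_offDiag, mem_univ, true_and]
          tauto
        rw [hfe, Finset.offDiag_card, hzdef]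
  -- coordinate double count
  have hcoordN : (∑ c ∈ Cs, z c) * q = n * q ^ k := by
    have hswap : ∑ c ∈ Cs, z c
        = ∑ i : Fin n, (Cs.filter fun c => c i = 0).card := by
      rw [hzdef]
      calc ∑ c ∈ Cs, (univ.filter fun i => c i = 0).card
          = ∑ c ∈ Cs, ∑ i : Fin n, (if c i = 0 then 1 else 0) :=
            Finset.sum_congr rfl fun c _ => Finset.card_filter _ _
        _ = ∑ i : Fin n, ∑ c ∈ Cs, (if c i = 0 then 1 else 0) := Finset.sum_comm
        _ = ∑ i : Fin n, (Cs.filter fun c => c i = 0).card :=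
            Finset.sum_congr rfl fun i _ => (Finset.card_filter _ _).symm
    rw [hswap, Finset.sum_mul]
    have hx : ∑ i : Fin n, (Cs.filter fun c => c i = 0).card * q
        = ∑ _i : Fin n, q ^ k := Finset.sum_congr rfl fun i _ => hsingle i
    rw [hx, Finset.sum_const, card_univ, Fintype.card_fin, smul_eq_mul]
  -- weight partition
  obtain ⟨E0, hE0def⟩ : ∃ s : Finset (Fin n → F), s = Cs.erase 0 := ⟨_, rfl⟩
  obtain ⟨A, hAdef⟩ : ∃ a : ℕ, a = (E0.filter fun c => hammingNorm c = d).card := ⟨_, rfl⟩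
  have hsplit : ∀ f : ℕ → ℤ, f 0 = 0 →
      ∑ c ∈ Cs, f (z c) = f n + (A : ℤ) * f (n - d) := by
    intro f hf0
    have h1 : Cs = insert 0 E0 := by rw [hE0def]; exact (Finset.insert_erase h0Cs).symm
    rw [h1, Finset.sum_insert (by rw [hE0def]; exact Finset.notMem_erase _ _)]
    have hz0 : z (0 : Fin n → F) = n := by simp [hzdef]
    rw [hz0]
    congr 1
    rw [← Finset.sum_filter_add_sum_filter_not E0 (fun c => hammingNorm c = d)]
    have hD : ∀ c ∈ E0.filter (fun c => hammingNorm c = d), f (z c) = f (n - d) := by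
      intro c hc
      rw [mem_filter] at hc
      have h2 := hzwt c
      rw [hc.2] at h2
      have h3 : z c = n - d := by omega
      rw [h3]
    have hE : ∀ c ∈ E0.filter (fun c => ¬ hammingNorm c = d), f (z c) = 0 := by
      intro c hc
      rw [mem_filter, hE0def, Finset.mem_erase] at hc
      have hw := hweights c ((hmem c).1 hc.1.2) hc.1.1
      have hwn : hammingNorm c = n := by tauto
      have h2 := hzwt c
      have hzc : z c = 0 := by omega
      rw [hzc, hf0]
    have hDx : ∑ c ∈ E0.filter (fun c => hammingNorm c = d), f (z c)
        = ∑ _c ∈ E0.filter (fun c => hammingNorm c = d), f (n - d) :=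
      Finset.sum_congr rfl hD
    have hEx : ∑ c ∈ E0.filter (fun c => ¬ hammingNorm c = d), f (z c)
        = ∑ _c ∈ E0.filter (fun c => ¬ hammingNorm c = d), (0 : ℤ) :=
      Finset.sum_congr rfl hE
    rw [hDx, hEx, Finset.sum_const, Finset.sum_const_zero, add_zero, nsmul_eq_mul, ← hAdef]
  have hdlen : d ≤ n := by omega
  have zsum1 : ∑ c ∈ Cs, (z c : ℤ) = n + (A : ℤ) * ((n : ℤ) - d) := by
    have h0 : ∑ c ∈ Cs, (z c : ℤ) = ((n : ℕ) : ℤ) + (A : ℤ) * (((n - d : ℕ)) : ℤ) :=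
      hsplit (fun m => (m : ℤ)) (by simp)
    rw [h0, Nat.cast_sub hdlen]
  have hSzZ : (S : ℤ) = ((n : ℤ) ^ 2 - n) + (A : ℤ) * (((n : ℤ) - d) ^ 2 - ((n : ℤ) - d)) := by
    have hle : ∀ m : ℕ, m ≤ m * m := by
      intro m
      cases m with
      | zero => simp
      | succ t => exact Nat.le_mul_of_pos_left _ t.succ_pos
    have h1 : (S : ℤ) = ∑ c ∈ Cs, ((z c : ℤ) ^ 2 - (z c : ℤ)) := by
      rw [hSz, Nat.cast_sum]
      refine Finset.sum_congr rfl fun c _ => ?_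
      rw [Nat.cast_sub (hle _)]
      push_cast
      ring
    have h2 : ∑ c ∈ Cs, ((z c : ℤ) ^ 2 - (z c : ℤ))
        = (((n : ℕ) : ℤ) ^ 2 - ((n : ℕ) : ℤ))
          + (A : ℤ) * ((((n - d : ℕ)) : ℤ) ^ 2 - (((n - d : ℕ)) : ℤ)) :=
      hsplit (fun m => (m : ℤ) ^ 2 - m) (by simp)
    rw [h1, h2, Nat.cast_sub hdlen]
  have e1 : (q : ℤ) * ((n : ℤ) + (A : ℤ) * ((n : ℤ) - d)) = (n : ℤ) * (q : ℤ) ^ k := by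
    have h2 := congrArg (Nat.cast : ℕ → ℤ) hcoordN
    push_cast at h2
    rw [zsum1] at h2
    linarith
  have key : (q : ℤ) ^ 2 * (S : ℤ) - (n : ℤ) * ((n : ℤ) - 1) * (q : ℤ) ^ k
      = (n : ℤ) * ((q : ℤ) ^ 2 * d
          - (q : ℤ) ^ k * ((q : ℤ) * d - ((q : ℤ) - 1) * ((n : ℤ) - 1))) := by
    linear_combination (q : ℤ) ^ 2 * hSzZ + ((q : ℤ) * ((n : ℤ) - d - 1)) * e1
  have hNz : (n : ℤ) ≠ 0 := by
    have h4 : (4 : ℤ) ≤ n := by exact_mod_cast hn4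
    linarith
  -- chain of equivalences
  have hIdIff : ((q : ℤ) ^ k * ((q : ℤ) * d - ((q : ℤ) - 1) * ((n : ℤ) - 1))
        = (q : ℤ) ^ 2 * d)
      ↔ (q : ℤ) ^ 2 * (S : ℤ) = (n : ℤ) * ((n : ℤ) - 1) * (q : ℤ) ^ k := by
    constructor
    · intro h
      have h2 : (q : ℤ) ^ 2 * d - (q : ℤ) ^ k * ((q : ℤ) * d
          - ((q : ℤ) - 1) * ((n : ℤ) - 1)) = 0 := by linarith
      rw [h2, mul_zero] at key
      linarith
    · intro h
      have h2 : (n : ℤ) * ((q : ℤ) ^ 2 * d - (q : ℤ) ^ k * ((q : ℤ) * d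
          - ((q : ℤ) - 1) * ((n : ℤ) - 1))) = 0 := by linarith
      rcases mul_eq_zero.1 h2 with h3 | h3
      · exact absurd h3 hNz
      · linarith
  have hnn : n ≤ n * n := Nat.le_mul_of_pos_left n (by omega)
  have hSIff : ((q : ℤ) ^ 2 * (S : ℤ) = (n : ℤ) * ((n : ℤ) - 1) * (q : ℤ) ^ k)
      ↔ ∀ p ∈ (univ : Finset (Fin n)).offDiag, q ^ k = q ^ 2 * B p.1 p.2 := by
    have hiff : (∑ _p ∈ (univ : Finset (Fin n)).offDiag, q ^ k
          = ∑ p ∈ (univ : Finset (Fin n)).offDiag, q ^ 2 * B p.1 p.2)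
        ↔ ∀ p ∈ (univ : Finset (Fin n)).offDiag, q ^ k = q ^ 2 * B p.1 p.2 :=
      Finset.sum_eq_sum_iff_of_le (fun p _ => hBle p.1 p.2)
    have hsl : ∑ _p ∈ (univ : Finset (Fin n)).offDiag, q ^ k
        = (n * n - n) * q ^ k := by
      rw [Finset.sum_const, Finset.offDiag_card, smul_eq_mul, card_univ, Fintype.card_fin]
    have hsr : ∑ p ∈ (univ : Finset (Fin n)).offDiag, q ^ 2 * B p.1 p.2
        = q ^ 2 * S := by
      rw [hSdef, Finset.mul_sum]
    rw [hsl, hsr] at hiff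
    rw [← hiff]
    constructor
    · intro h
      have h2 : ((n * n - n) * q ^ k : ℤ) = ((q : ℤ) ^ 2 * S : ℤ) := by
        push_cast [Nat.cast_sub hnn]
        linarith
      exact_mod_cast h2
    · intro h
      have h2 := congrArg (Nat.cast : ℕ → ℤ) h
      push_cast [Nat.cast_sub hnn] at h2
      linarith
  rw [hIdIff, hSIff]
  constructor
  · intro h i j hij a b
    have hp : (i, j) ∈ (univ : Finset (Fin n)).offDiag := by
      simp [Finset.mem_offDiag, hij]
    have h2 := h (i, j) hp
    rw [hbridge]
    exact (hpair_eq i j).1 h2.symm a b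
  · intro h p hp
    have hij : p.1 ≠ p.2 := (Finset.mem_offDiag.1 hp).2.2
    refine ((hpair_eq p.1 p.2).2 fun a b => ?_).symm
    rw [← hbridge]
    exact h p.1 p.2 hij a b
end

section
/- Let A be a finite alphabet with |A| = q ≥ 2 and let C ⊆ A^n be a code of cardinality |C| = qn whose minimum distance is (q−1)n/q, i.e., q·d(x,y) ≥ (q−1)n for all distinct x, y ∈ C. Then C can be partitioned into n pairwise disjoint simplex subcodes: there is a partition of C into n subsets, each of cardinality q, such that any two distinct codewords lying in the same subset are at Hamming distance exactly n. -/
set_option linter.unusedSectionVars false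

open Finset

section SP
variable {A : Type*} [Fintype A] [DecidableEq A] {n q : ℕ}

/-- number of coordinates where `x` and `y` agree -/
private def spAg (x y : Fin n → A) : ℕ := #{i | x i = y i}

private lemma spAg_comm (x y : Fin n → A) : spAg x y = spAg y x := by
  unfold spAg; congr 1; ext i; simp [eq_comm]

private lemma spDist_add_ag (x y : Fin n → A) : hammingDist x y + spAg x y = n := by
  classical
  have := Finset.card_filter_add_card_filter_not
    (s := (univ : Finset (Fin n))) (p := fun i => x i = y i)
  simp only [card_univ, Fintype.card_fin] at this
  rw [hammingDist, add_comm]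
  convert this using 2
  unfold spAg; congr

private lemma spAg_self (x : Fin n → A) : spAg x x = n := by
  simp [spAg]

private lemma spAg_eq_zero_iff (x y : Fin n → A) : spAg x y = 0 ↔ ∀ i, x i ≠ y i := by
  simp [spAg, Finset.card_eq_zero, Finset.filter_eq_empty_iff]

private def spCnt (B : Finset (Fin n → A)) (i : Fin n) (c : A) : ℕ := #{x ∈ B | x i = c}

private lemma spSum_cnt (B : Finset (Fin n → A)) (i : Fin n) :
    ∑ c : A, spCnt B i c = #B :=
  (Finset.card_eq_sum_card_fiberwise (fun x _ => mem_univ (x i))).symm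

private lemma spRow (B : Finset (Fin n → A)) (x : Fin n → A) :
    ∑ y ∈ B, spAg x y = ∑ i : Fin n, spCnt B i (x i) := by
  have h1 : ∀ y, spAg x y = ∑ i : Fin n, if y i = x i then 1 else 0 := by
    intro y
    rw [spAg, card_filter]
    exact sum_congr rfl fun i _ => by simp [eq_comm]
  rw [sum_congr rfl fun y _ => h1 y, Finset.sum_comm]
  exact sum_congr rfl fun i _ => (card_filter _ _).symm

private lemma spFiber (B : Finset (Fin n → A)) (i : Fin n) (f : A → ℕ) :
    ∑ x ∈ B, f (x i) = ∑ c : A, spCnt B i c * f c := by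
  have hh := Finset.sum_fiberwise_eq_sum_filter B univ (fun x => x i) (fun x => f (x i))
  simp only [mem_univ, filter_true] at hh
  rw [← hh]
  refine sum_congr rfl fun c _ => ?_
  have : ∀ x ∈ B.filter (fun x => x i = c), f (x i) = f c := by
    intro x hx
    rw [(mem_filter.1 hx).2]
  rw [sum_congr rfl this, sum_const, smul_eq_mul, spCnt, mul_comm]

private lemma spTsum (B : Finset (Fin n → A)) :
    ∑ x ∈ B, ∑ y ∈ B, spAg x y = ∑ i : Fin n, ∑ c : A, spCnt B i c ^ 2 := by
  have h1 : ∀ x ∈ B, ∑ y ∈ B, spAg x y = ∑ i : Fin n, spCnt B i (x i) :=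
    fun x _ => spRow B x
  rw [sum_congr rfl h1, Finset.sum_comm]
  refine sum_congr rfl fun i _ => ?_
  rw [spFiber B i (spCnt B i)]
  exact sum_congr rfl fun c _ => (sq (spCnt B i c)).symm

private lemma spDiag (B : Finset (Fin n → A)) :
    ∑ x ∈ B, ∑ y ∈ B, spAg x y
      = #B * n + ∑ x ∈ B, ∑ y ∈ B.erase x, spAg x y := by
  have h1 : ∀ x ∈ B, ∑ y ∈ B, spAg x y = n + ∑ y ∈ B.erase x, spAg x y := by
    intro x hx
    rw [← Finset.add_sum_erase B _ hx, spAg_self]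
  rw [sum_congr rfl h1, sum_add_distrib, sum_const, smul_eq_mul]

private lemma spCS (hq : Fintype.card A = q) (B : Finset (Fin n → A)) (i : Fin n) :
    #B ^ 2 ≤ q * ∑ c : A, spCnt B i c ^ 2 := by
  have h := sq_sum_le_card_mul_sum_sq (s := (univ : Finset A))
    (f := fun c => spCnt B i c)
  rw [spSum_cnt, card_univ, hq] at h
  exact h

private lemma spForceLe {α : Type*} {s : Finset α} {f : α → ℕ} {k : ℕ}
    (hle : ∀ a ∈ s, f a ≤ k) (h : #s * k ≤ ∑ a ∈ s, f a) : ∀ a ∈ s, f a = k := by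
  intro a ha
  by_contra hne
  have hlt : f a < k := lt_of_le_of_ne (hle a ha) hne
  have : ∑ a ∈ s, f a < ∑ _a ∈ s, k :=
    Finset.sum_lt_sum hle ⟨a, ha, hlt⟩
  rw [sum_const, smul_eq_mul] at this
  omega

private lemma spForceGe {α : Type*} {s : Finset α} {f : α → ℕ} {k : ℕ}
    (hge : ∀ a ∈ s, k ≤ f a) (h : ∑ a ∈ s, f a ≤ #s * k) : ∀ a ∈ s, f a = k := by
  intro a ha
  by_contra hne
  have hlt : k < f a := lt_of_le_of_ne (hge a ha) (Ne.symm hne)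
  have : ∑ _a ∈ s, k < ∑ a ∈ s, f a :=
    Finset.sum_lt_sum hge ⟨a, ha, hlt⟩
  rw [sum_const, smul_eq_mul] at this
  omega

end SP

section SP2
variable {A : Type*} [Fintype A] [DecidableEq A] {n q : ℕ}

set_option maxHeartbeats 1000000

/-- Any subcode whose members all share a fixed value in a fixed coordinate has
at most `n` elements. -/
private lemma spBlockLe (hq : Fintype.card A = q) (hq2 : 2 ≤ q) (hn : 1 ≤ n)
    {F B : Finset (Fin n → A)}
    (hagF : ∀ x ∈ F, ∀ y ∈ F, x ≠ y → q * spAg x y ≤ n)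
    (hBF : B ⊆ F) {i₀ : Fin n} {b : A} (hBi : ∀ x ∈ B, x i₀ = b) :
    #B ≤ n := by
  rcases B.eq_empty_or_nonempty with h | hB
  · simp [h]
  have hm1 : 1 ≤ #B := card_pos.mpr hB
  -- the coordinate i₀ contributes #B² to the square sum
  have hSj : ∑ c : A, spCnt B i₀ c ^ 2 = #B ^ 2 := by
    have h1 : ∀ c : A, spCnt B i₀ c = if c = b then #B else 0 := by
      intro c
      unfold spCnt
      split
      · next hcb => subst hcb; rw [filter_true_of_mem hBi]
      · next hcb =>
        rw [Finset.card_eq_zero, Finset.filter_eq_empty_iff]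
        intro x hx hxc
        exact absurd (hxc.symm.trans (hBi x hx)) hcb
    rw [sum_congr rfl fun c _ => by rw [h1 c]]
    simp
  -- lower bound for q * Tsum
  have hlow : q * #B ^ 2 + (n - 1) * #B ^ 2 ≤ q * ∑ x ∈ B, ∑ y ∈ B, spAg x y := by
    rw [spTsum, Finset.mul_sum]
    have hi₀ : i₀ ∈ (univ : Finset (Fin n)) := mem_univ i₀
    rw [← Finset.add_sum_erase _ _ hi₀]
    have h2 : (n - 1) * #B ^ 2 ≤ ∑ i ∈ univ.erase i₀, q * ∑ c : A, spCnt B i c ^ 2 := by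
      calc (n - 1) * #B ^ 2 = ∑ _i ∈ univ.erase i₀, #B ^ 2 := by
            rw [sum_const, card_erase_of_mem hi₀, card_univ, Fintype.card_fin, smul_eq_mul]
        _ ≤ _ := sum_le_sum fun i _ => spCS hq B i
    exact add_le_add (by rw [hSj]) h2
  -- upper bound
  have hup : q * ∑ x ∈ B, ∑ y ∈ B, spAg x y ≤ q * (#B * n) + #B * ((#B - 1) * n) := by
    rw [spDiag, Nat.mul_add]
    refine Nat.add_le_add_left ?_ _
    rw [Finset.mul_sum]
    calc ∑ x ∈ B, q * ∑ y ∈ B.erase x, spAg x y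
        = ∑ x ∈ B, ∑ y ∈ B.erase x, q * spAg x y := by
          exact sum_congr rfl fun x _ => Finset.mul_sum _ _ _
      _ ≤ ∑ x ∈ B, ∑ _y ∈ B.erase x, n := by
          refine sum_le_sum fun x hx => sum_le_sum fun y hy => ?_
          exact hagF x (hBF hx) y (hBF (mem_of_mem_erase hy))
            (fun hxy => (Finset.mem_erase.1 hy).1 hxy.symm)
      _ = ∑ x ∈ B, (#B - 1) * n := by
          refine sum_congr rfl fun x hx => ?_
          rw [sum_const, card_erase_of_mem hx, smul_eq_mul]
      _ = #B * ((#B - 1) * n) := by rw [sum_const, smul_eq_mul]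
  have hcomb := le_trans hlow hup
  -- conclude #B ≤ n
  by_contra hgt
  push_neg at hgt
  obtain ⟨m', hm'⟩ : ∃ m', #B = m' + 1 := ⟨#B - 1, by omega⟩
  obtain ⟨n', hn'⟩ : ∃ n', n = n' + 1 := ⟨n - 1, by omega⟩
  rw [hm', hn'] at hcomb hgt
  simp only [Nat.add_sub_cancel] at hcomb
  have h2 : (m' + 1) * (q * (m' + 1) + n' * (m' + 1))
      ≤ (m' + 1) * (q * (n' + 1) + m' * (n' + 1)) := by
    calc (m' + 1) * (q * (m' + 1) + n' * (m' + 1))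
        = q * (m' + 1) ^ 2 + n' * (m' + 1) ^ 2 := by ring
      _ ≤ q * ((m' + 1) * (n' + 1)) + (m' + 1) * (m' * (n' + 1)) := hcomb
      _ = (m' + 1) * (q * (n' + 1) + m' * (n' + 1)) := by ring
  have hdiv := Nat.le_of_mul_le_mul_left h2 (Nat.succ_pos m')
  have hgt' : n' < m' := by omega
  nlinarith [hdiv, hgt', hq2]

/-- In a code of size `q*n`, every block (fiber of a coordinate) has exactly `n`
elements. -/
private lemma spBlockCard (hq : Fintype.card A = q) (hq2 : 2 ≤ q)
    {F : Finset (Fin n → A)} (hF : #F = q * n)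
    (hagF : ∀ x ∈ F, ∀ y ∈ F, x ≠ y → q * spAg x y ≤ n)
    (i : Fin n) (b : A) : spCnt F i b = n := by
  have hle : ∀ c ∈ (univ : Finset A), spCnt F i c ≤ n := by
    intro c _
    exact spBlockLe hq hq2 i.pos hagF (filter_subset _ _) (fun x hx => (mem_filter.1 hx).2)
  have hsum : #(univ : Finset A) * n ≤ ∑ c : A, spCnt F i c := by
    rw [spSum_cnt, hF, card_univ, hq]
  exact spForceLe hle hsum b (mem_univ b)

end SP2

section SP3
variable {A : Type*} [Fintype A] [DecidableEq A] {n q : ℕ}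

set_option maxHeartbeats 1000000

private lemma spCntSqSelf {B : Finset (Fin n → A)} {i₀ : Fin n} {b : A}
    (hBi : ∀ x ∈ B, x i₀ = b) : ∑ c : A, spCnt B i₀ c ^ 2 = #B ^ 2 := by
  have h1 : ∀ c : A, spCnt B i₀ c = if c = b then #B else 0 := by
    intro c
    unfold spCnt
    split
    · next hcb => subst hcb; rw [filter_true_of_mem hBi]
    · next hcb =>
      rw [Finset.card_eq_zero, Finset.filter_eq_empty_iff]
      intro x hx hxc
      exact absurd (hxc.symm.trans (hBi x hx)) hcb
  rw [sum_congr rfl fun c _ => by rw [h1 c]]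
  simp

/-- The main equality-case analysis for a block: within a block all pairwise
agreements are exactly `n/q`, and every other coordinate sees every symbol
exactly `n/q` times within the block. -/
private lemma spBlockStruct (hq : Fintype.card A = q) (hq2 : 2 ≤ q) (hn : 1 ≤ n)
    (hqn : q ∣ n) {F : Finset (Fin n → A)} (hF : #F = q * n)
    (hagF : ∀ x ∈ F, ∀ y ∈ F, x ≠ y → q * spAg x y ≤ n)
    (j : Fin n) (b : A) :
    (∀ x ∈ F.filter (fun x => x j = b), ∀ y ∈ F.filter (fun x => x j = b),
        x ≠ y → spAg x y = n / q) ∧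
    (∀ i : Fin n, i ≠ j → ∀ c : A,
        spCnt (F.filter (fun x => x j = b)) i c = n / q) := by
  have hq0 : 0 < q := by omega
  set k := n / q with hkdef
  have hk : q * k = n := Nat.mul_div_cancel' hqn
  have hk1 : 1 ≤ k := by
    rcases Nat.eq_zero_or_pos k with h | h
    · rw [h, Nat.mul_zero] at hk; omega
    · exact h
  set B := F.filter (fun x => x j = b) with hBdef
  have hBsub : B ⊆ F := filter_subset _ _
  have hBj : ∀ x ∈ B, x j = b := fun x hx => (mem_filter.1 hx).2
  have hBcard : #B = n := spBlockCard hq hq2 hF hagF j b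
  have hagk : ∀ x ∈ B, ∀ y ∈ B, x ≠ y → spAg x y ≤ k := by
    intro x hx y hy hxy
    have h1 := hagF x (hBsub hx) y (hBsub hy) hxy
    exact Nat.le_of_mul_le_mul_left (le_of_le_of_eq h1 hk.symm) hq0
  have hSj : ∑ c : A, spCnt B j c ^ 2 = n * n := by
    rw [spCntSqSelf hBj, hBcard, sq]
  have hSge : ∀ i : Fin n, n * k ≤ ∑ c : A, spCnt B i c ^ 2 := by
    intro i
    have h1 := spCS hq B i
    rw [hBcard] at h1
    have h2 : q * (n * k) = n ^ 2 := by rw [sq, ← hk]; ring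
    exact Nat.le_of_mul_le_mul_left (by omega) hq0
  -- total sum identity
  have htot : ∑ i : Fin n, ∑ c : A, spCnt B i c ^ 2
      = n * n + ∑ x ∈ B, ∑ y ∈ B.erase x, spAg x y := by
    rw [← spTsum, spDiag, hBcard]
  have hsplit : ∑ i : Fin n, ∑ c : A, spCnt B i c ^ 2
      = n * n + ∑ i ∈ univ.erase j, ∑ c : A, spCnt B i c ^ 2 := by
    rw [← Finset.add_sum_erase _ _ (mem_univ j), hSj]
  have hDeq : ∑ i ∈ univ.erase j, ∑ c : A, spCnt B i c ^ 2
      = ∑ x ∈ B, ∑ y ∈ B.erase x, spAg x y := by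
    omega
  -- upper bound on D
  have hrowle : ∀ x ∈ B, ∑ y ∈ B.erase x, spAg x y ≤ (n - 1) * k := by
    intro x hx
    calc ∑ y ∈ B.erase x, spAg x y ≤ ∑ _y ∈ B.erase x, k :=
          sum_le_sum fun y hy => hagk x hx y (mem_of_mem_erase hy)
            (fun hxy => (Finset.mem_erase.1 hy).1 hxy.symm)
      _ = (n - 1) * k := by rw [sum_const, card_erase_of_mem hx, hBcard, smul_eq_mul]
  have hDle : ∑ x ∈ B, ∑ y ∈ B.erase x, spAg x y ≤ n * ((n - 1) * k) := by
    calc ∑ x ∈ B, ∑ y ∈ B.erase x, spAg x y ≤ ∑ _x ∈ B, (n - 1) * k :=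
          sum_le_sum hrowle
      _ = n * ((n - 1) * k) := by rw [sum_const, hBcard, smul_eq_mul]
  have hDge : (n - 1) * (n * k) ≤ ∑ i ∈ univ.erase j, ∑ c : A, spCnt B i c ^ 2 := by
    calc (n - 1) * (n * k) = ∑ _i ∈ univ.erase j, n * k := by
          rw [sum_const, card_erase_of_mem (mem_univ j), card_univ, Fintype.card_fin,
            smul_eq_mul]
      _ ≤ _ := sum_le_sum fun i _ => hSge i
  have hmulcomm : n * ((n - 1) * k) = (n - 1) * (n * k) := by ring
  have hD : ∑ x ∈ B, ∑ y ∈ B.erase x, spAg x y = n * ((n - 1) * k) := by omega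
  -- force rows, then entries
  have hrows : ∀ x ∈ B, ∑ y ∈ B.erase x, spAg x y = (n - 1) * k := by
    refine spForceLe hrowle ?_
    rw [hBcard, hD]
  have hagEq : ∀ x ∈ B, ∀ y ∈ B, x ≠ y → spAg x y = k := by
    intro x hx y hy hxy
    have hyx : y ∈ B.erase x := Finset.mem_erase.2 ⟨fun h => hxy h.symm, hy⟩
    refine spForceLe (fun z hz => hagk x hx z (mem_of_mem_erase hz)
      (fun h => (Finset.mem_erase.1 hz).1 h.symm)) ?_ y hyx
    rw [card_erase_of_mem hx, hBcard, hrows x hx]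
  -- force square sums
  have hSEq : ∀ i ∈ univ.erase j, ∑ c : A, spCnt B i c ^ 2 = n * k := by
    refine spForceGe (fun i _ => hSge i) ?_
    rw [hDeq, card_erase_of_mem (mem_univ j), card_univ, Fintype.card_fin, ← hmulcomm]
    exact hDle
  -- force counts via an integer computation
  have hcnt : ∀ i : Fin n, i ≠ j → ∀ c : A, spCnt B i c = k := by
    intro i hij c
    have hsum1 : ∑ c : A, (spCnt B i c : ℤ) = (n : ℤ) := by
      have := spSum_cnt B i
      rw [hBcard] at this
      exact_mod_cast congrArg (Nat.cast : ℕ → ℤ) this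
    have hsum2 : ∑ c : A, (spCnt B i c : ℤ) ^ 2 = (n : ℤ) * k := by
      have := hSEq i (Finset.mem_erase.2 ⟨hij, mem_univ i⟩)
      exact_mod_cast congrArg (Nat.cast : ℕ → ℤ) this
    have hkz : (q : ℤ) * k = n := by exact_mod_cast hk
    have hzero : ∑ c : A, ((q : ℤ) * spCnt B i c - n) ^ 2 = 0 := by
      have expand : ∀ c : A, ((q : ℤ) * spCnt B i c - n) ^ 2
          = (q:ℤ)^2 * (spCnt B i c:ℤ)^2 - 2*q*n*(spCnt B i c:ℤ) + (n:ℤ)^2 :=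
        fun c => by ring
      rw [sum_congr rfl fun c _ => expand c, Finset.sum_add_distrib,
        Finset.sum_sub_distrib, ← Finset.mul_sum, ← Finset.mul_sum, hsum1, hsum2,
        sum_const, card_univ, hq]
      linear_combination (q : ℤ) * n * hkz
    have hz := (Finset.sum_eq_zero_iff_of_nonneg (fun c _ => sq_nonneg _)).1 hzero
      c (mem_univ c)
    have hz2 : (q : ℤ) * spCnt B i c - n = 0 := by
      exact pow_eq_zero_iff (by norm_num) |>.1 hz
    have hz3 : (q : ℤ) * spCnt B i c = (q : ℤ) * k := by
      rw [hkz]; linarith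
    have hz4 : (spCnt B i c : ℤ) = (k : ℤ) :=
      mul_left_cancel₀ (by exact_mod_cast hq0.ne') hz3
    exact_mod_cast hz4
  exact ⟨hagEq, hcnt⟩

end SP3

section SP4
variable {A : Type*} [Fintype A] [DecidableEq A] {n q : ℕ}

set_option maxHeartbeats 1000000

/-- Any two distinct codewords that agree somewhere agree in exactly `n/q`
coordinates. -/
private lemma spGlobal (hq : Fintype.card A = q) (hq2 : 2 ≤ q) (hn : 1 ≤ n)
    (hqn : q ∣ n) {F : Finset (Fin n → A)} (hF : #F = q * n)
    (hagF : ∀ x ∈ F, ∀ y ∈ F, x ≠ y → q * spAg x y ≤ n)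
    {x y : Fin n → A} (hx : x ∈ F) (hy : y ∈ F) (hxy : x ≠ y)
    (hne : spAg x y ≠ 0) : spAg x y = n / q := by
  have hnonempty : ({i | x i = y i} : Finset (Fin n)).Nonempty :=
    Finset.card_ne_zero.1 hne
  obtain ⟨j, hj⟩ := hnonempty
  have hj' : x j = y j := (mem_filter.1 hj).2
  exact (spBlockStruct hq hq2 hn hqn hF hagF j (x j)).1 x
    (mem_filter.2 ⟨hx, rfl⟩) y (mem_filter.2 ⟨hy, hj'.symm⟩) hxy

private lemma spRowSum (hq : Fintype.card A = q) (hq2 : 2 ≤ q)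
    {F : Finset (Fin n → A)} (hF : #F = q * n)
    (hagF : ∀ x ∈ F, ∀ y ∈ F, x ≠ y → q * spAg x y ≤ n)
    (x : Fin n → A) : ∑ y ∈ F, spAg x y = n * n := by
  rw [spRow]
  rw [sum_congr rfl fun i (_ : i ∈ univ) => spBlockCard hq hq2 hF hagF i (x i)]
  simp [mul_comm]

/-- Each codeword is at Hamming distance `n` from exactly `q - 1` other
codewords. -/
private lemma spSCard (hq : Fintype.card A = q) (hq2 : 2 ≤ q) (hn : 1 ≤ n)
    (hqn : q ∣ n) {F : Finset (Fin n → A)} (hF : #F = q * n)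
    (hagF : ∀ x ∈ F, ∀ y ∈ F, x ≠ y → q * spAg x y ≤ n)
    {x : Fin n → A} (hx : x ∈ F) :
    #((F.erase x).filter (fun y => spAg x y = 0)) + 1 = q := by
  have hq0 : 0 < q := by omega
  set k := n / q with hkdef
  have hk : q * k = n := Nat.mul_div_cancel' hqn
  have hk1 : 1 ≤ k := by
    rcases Nat.eq_zero_or_pos k with h | h
    · rw [h, Nat.mul_zero] at hk; omega
    · exact h
  have hrow := spRowSum hq hq2 hF hagF x
  have herase : ∑ y ∈ F.erase x, spAg x y = n * (n - 1) := by
    have h1 : spAg x x + ∑ y ∈ F.erase x, spAg x y = n * n := by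
      rw [Finset.add_sum_erase F _ hx]; exact hrow
    rw [spAg_self] at h1
    have h2 : n * n = n + n * (n - 1) := by
      rcases n with _ | n'
      · omega
      · simp only [Nat.add_sub_cancel]; ring
    omega
  have hsplit := Finset.sum_filter_add_sum_filter_not (F.erase x)
    (fun y => spAg x y = 0) (fun y => spAg x y)
  have hzero : ∑ y ∈ (F.erase x).filter (fun y => spAg x y = 0), spAg x y = 0 :=
    Finset.sum_eq_zero fun y hy => (mem_filter.1 hy).2
  have hnonzero : ∑ y ∈ (F.erase x).filter (fun y => ¬spAg x y = 0), spAg x y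
      = #((F.erase x).filter (fun y => ¬spAg x y = 0)) * k := by
    refine Finset.sum_const_nat fun y hy => ?_
    have hy1 := mem_filter.1 hy
    have hy2 := Finset.mem_erase.1 hy1.1
    exact spGlobal hq hq2 hn hqn hF hagF hx hy2.2 (Ne.symm hy2.1) hy1.2
  have hNcard : #((F.erase x).filter (fun y => ¬spAg x y = 0)) = q * (n - 1) := by
    have h3 : #((F.erase x).filter (fun y => ¬spAg x y = 0)) * k = (q * (n - 1)) * k := by
      rw [← hnonzero]
      have h4 : (q * (n - 1)) * k = n * (n - 1) := by
        rw [mul_comm q (n - 1), mul_assoc, hk, mul_comm]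
      omega
    exact Nat.eq_of_mul_eq_mul_right hk1 h3
  have hpart := Finset.card_filter_add_card_filter_not
    (s := F.erase x) (p := fun y => spAg x y = 0)
  rw [card_erase_of_mem hx, hF, hNcard] at hpart
  have hqn' : q * n = q * (n - 1) + q := by
    rcases n with _ | n'
    · omega
    · simp only [Nat.add_sub_cancel]; ring
  omega

/-- Two distinct codewords both at distance `n` from `x` are at distance `n`
from each other. -/
private lemma spSDisj (hq : Fintype.card A = q) (hq2 : 2 ≤ q) (hn : 1 ≤ n)
    (hqn : q ∣ n) {F : Finset (Fin n → A)} (hF : #F = q * n)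
    (hagF : ∀ x ∈ F, ∀ y ∈ F, x ≠ y → q * spAg x y ≤ n)
    {x y z : Fin n → A} (hx : x ∈ F) (hy : y ∈ F) (hz : z ∈ F)
    (hxy : spAg x y = 0) (hxz : spAg x z = 0) (hyz : y ≠ z) : spAg y z = 0 := by
  by_contra h0
  have hq0 : 0 < q := by omega
  set k := n / q with hkdef
  have hk : q * k = n := Nat.mul_div_cancel' hqn
  have hk1 : 1 ≤ k := by
    rcases Nat.eq_zero_or_pos k with h | h
    · rw [h, Nat.mul_zero] at hk; omega
    · exact h
  obtain ⟨j, hj⟩ : ({i | y i = z i} : Finset (Fin n)).Nonempty :=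
    Finset.card_ne_zero.1 h0
  have hj' : y j = z j := (mem_filter.1 hj).2
  set b := y j with hbdef
  set B := F.filter (fun w => w j = b) with hBdef
  have hyB : y ∈ B := mem_filter.2 ⟨hy, rfl⟩
  have hzB : z ∈ B := mem_filter.2 ⟨hz, hj'.symm⟩
  have hBcard : #B = n := spBlockCard hq hq2 hF hagF j b
  have hxb : x j ≠ b := (spAg_eq_zero_iff x y).1 hxy j
  have hcnt := (spBlockStruct hq hq2 hn hqn hF hagF j b).2
  -- sum of agreements of x with the block
  have hrowB : ∑ w ∈ B, spAg x w = (n - 1) * k := by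
    rw [spRow]
    have hcntj : spCnt B j (x j) = 0 := by
      rw [spCnt, Finset.card_eq_zero, Finset.filter_eq_empty_iff]
      intro w hw hwx
      exact hxb (hwx ▸ (mem_filter.1 hw).2)
    rw [← Finset.add_sum_erase _ _ (mem_univ j), hcntj, Nat.zero_add]
    rw [sum_congr rfl fun i hi => hcnt i (Finset.mem_erase.1 hi).1 (x i)]
    rw [sum_const, card_erase_of_mem (mem_univ j), card_univ, Fintype.card_fin,
      smul_eq_mul]
  -- each agreement with the block is 0 or k
  have hxnotB : ∀ w ∈ B, w ≠ x := by
    intro w hw hwx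
    exact hxb (hwx ▸ (mem_filter.1 hw).2)
  -- split by zero agreement
  have hsplitsum := Finset.sum_filter_add_sum_filter_not B
    (fun w => spAg x w = 0) (fun w => spAg x w)
  have hzero : ∑ w ∈ B.filter (fun w => spAg x w = 0), spAg x w = 0 :=
    Finset.sum_eq_zero fun w hw => (mem_filter.1 hw).2
  have hnonzero : ∑ w ∈ B.filter (fun w => ¬spAg x w = 0), spAg x w
      = #(B.filter (fun w => ¬spAg x w = 0)) * k := by
    refine Finset.sum_const_nat fun w hw => ?_
    have hw1 := mem_filter.1 hw
    exact spGlobal hq hq2 hn hqn hF hagF hx (mem_filter.1 hw1.1).1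
      (Ne.symm (hxnotB w hw1.1)) hw1.2
  have hNcard : #(B.filter (fun w => ¬spAg x w = 0)) = n - 1 := by
    refine Nat.eq_of_mul_eq_mul_right hk1 ?_
    omega
  have hpart := Finset.card_filter_add_card_filter_not
    (s := B) (p := fun w => spAg x w = 0)
  have htwo : 1 < #(B.filter (fun w => spAg x w = 0)) :=
    Finset.one_lt_card.2 ⟨y, mem_filter.2 ⟨hyB, hxy⟩, z, mem_filter.2 ⟨hzB, hxz⟩, hyz⟩
  rw [hBcard, hNcard] at hpart
  omega

end SP4

section SP5
variable {A : Type*} [Fintype A] [DecidableEq A] {n q : ℕ}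

set_option maxHeartbeats 1000000

/-- If `q` does not divide `n` and `n ≥ 2`, no such code exists. -/
private lemma spNotDvd (hq : Fintype.card A = q) (hq2 : 2 ≤ q) (hn2 : 2 ≤ n)
    (hndvd : ¬ q ∣ n) {F : Finset (Fin n → A)} (hF : #F = q * n)
    (hagF : ∀ x ∈ F, ∀ y ∈ F, x ≠ y → q * spAg x y ≤ n) : False := by
  have hq0 : 0 < q := by omega
  have hagk0 : ∀ x ∈ F, ∀ y ∈ F, x ≠ y → spAg x y ≤ n / q := by
    intro x hx y hy hxy
    rw [Nat.le_div_iff_mul_le hq0, mul_comm]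
    exact hagF x hx y hy hxy
  obtain ⟨k, hkdef⟩ : ∃ k, n / q = k := ⟨_, rfl⟩
  obtain ⟨r, hrdef⟩ : ∃ r, n % q = r := ⟨_, rfl⟩
  have hagk : ∀ x ∈ F, ∀ y ∈ F, x ≠ y → spAg x y ≤ k := by
    rw [← hkdef]; exact hagk0
  have hdm : q * k + r = n := by rw [← hkdef, ← hrdef]; exact Nat.div_add_mod n q
  have hr : 0 < r := by
    rw [← hrdef]
    exact Nat.pos_of_ne_zero fun h => hndvd (Nat.dvd_of_mod_eq_zero h)
  -- lower bound for q * total sum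
  have hlow : n * ((q * n) * (q * n)) ≤ q * ∑ x ∈ F, ∑ y ∈ F, spAg x y := by
    rw [spTsum, Finset.mul_sum]
    calc n * ((q * n) * (q * n)) = ∑ _i : Fin n, (q * n) * (q * n) := by
          rw [sum_const, card_univ, Fintype.card_fin, smul_eq_mul]
      _ ≤ _ := by
          refine sum_le_sum fun i _ => ?_
          have h1 := spCS hq F i
          rw [hF] at h1
          calc (q * n) * (q * n) = (q * n) ^ 2 := (sq _).symm
            _ ≤ _ := h1
  -- upper bound
  have hup : q * ∑ x ∈ F, ∑ y ∈ F, spAg x y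
      ≤ q * ((q * n) * n) + q * ((q * n) * (((q * n) - 1) * k)) := by
    rw [spDiag, hF, Nat.mul_add]
    refine Nat.add_le_add_left (Nat.mul_le_mul_left q ?_) _
    calc ∑ x ∈ F, ∑ y ∈ F.erase x, spAg x y
        ≤ ∑ x ∈ F, ∑ _y ∈ F.erase x, k := by
          refine sum_le_sum fun x hx => sum_le_sum fun y hy => ?_
          exact hagk x hx y (mem_of_mem_erase hy)
            (fun hxy => (Finset.mem_erase.1 hy).1 hxy.symm)
      _ = ∑ x ∈ F, ((q * n) - 1) * k := by
          refine sum_congr rfl fun x hx => ?_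
          rw [sum_const, card_erase_of_mem hx, hF, smul_eq_mul]
      _ = (q * n) * (((q * n) - 1) * k) := by rw [sum_const, hF, smul_eq_mul]
  have hchain := le_trans hlow hup
  -- divide by q*n
  have hMpos : 0 < q * n := by positivity
  have hdiv1 : (q * n) * (n * (q * n)) ≤ (q * n) * (q * n + q * (((q * n) - 1) * k)) := by
    calc (q * n) * (n * (q * n)) = n * ((q * n) * (q * n)) := by ring
      _ ≤ q * ((q * n) * n) + q * ((q * n) * (((q * n) - 1) * k)) := hchain
      _ = (q * n) * (q * n + q * (((q * n) - 1) * k)) := by ring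
  have hdiv2 := Nat.le_of_mul_le_mul_left hdiv1 hMpos
  have hdiv3 : q * (n * n) ≤ q * (n + ((q * n) - 1) * k) := by
    calc q * (n * n) = n * (q * n) := by ring
      _ ≤ q * n + q * (((q * n) - 1) * k) := hdiv2
      _ = q * (n + ((q * n) - 1) * k) := by ring
  have hfin : n * n ≤ n + ((q * n) - 1) * k := Nat.le_of_mul_le_mul_left hdiv3 hq0
  -- now derive a contradiction
  have h5 : n * n = n * (q * k) + n * r := by
    calc n * n = n * (q * k + r) := by rw [hdm]
      _ = n * (q * k) + n * r := by ring
  have hM1 : (q * n) - 1 + 1 = q * n := by omega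
  have h6 : n * (q * k) = ((q * n) - 1) * k + k := by
    calc n * (q * k) = (q * n) * k := by ring
      _ = (((q * n) - 1) + 1) * k := by rw [hM1]
      _ = ((q * n) - 1) * k + k := by ring
  have h7 : k + n * r ≤ n := by omega
  have h8 : n ≤ n * r := Nat.le_mul_of_pos_right n hr
  have hk0 : k = 0 := by omega
  have hrn : r = n := by rw [hk0] at hdm; omega
  have h9 : n * 2 ≤ n * r := Nat.mul_le_mul_left n (by omega)
  omega

/-- The finset-level main theorem in the divisible case. -/
private lemma spMain (hq : Fintype.card A = q) (hq2 : 2 ≤ q) (hn : 1 ≤ n)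
    (hqn : q ∣ n) {F : Finset (Fin n → A)} (hF : #F = q * n)
    (hagF : ∀ x ∈ F, ∀ y ∈ F, x ≠ y → q * spAg x y ≤ n) :
    ∃ P : Finset (Finset (Fin n → A)),
      (∀ s ∈ P, ∀ t ∈ P, s ≠ t → Disjoint s t) ∧
      P.biUnion id = F ∧ #P = n ∧
      ∀ s ∈ P, #s = q ∧ ∀ x ∈ s, ∀ y ∈ s, x ≠ y → spAg x y = 0 := by
  have hq0 : 0 < q := by omega
  set S : (Fin n → A) → Finset (Fin n → A) :=
    fun x => (F.erase x).filter (fun y => spAg x y = 0) with hSdef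
  set T : (Fin n → A) → Finset (Fin n → A) := fun x => insert x (S x) with hTdef
  have hSsub : ∀ x, S x ⊆ F := fun x => (filter_subset _ _).trans (erase_subset _ _)
  have hxS : ∀ x, x ∉ S x := fun x hx =>
    (Finset.mem_erase.1 (mem_filter.1 hx).1).1 rfl
  have hxT : ∀ x, x ∈ T x := fun x => mem_insert_self _ _
  have hTsub : ∀ x ∈ F, T x ⊆ F := fun x hx =>
    Finset.insert_subset hx (hSsub x)
  have hTcard : ∀ x ∈ F, #(T x) = q := by
    intro x hx
    rw [hTdef]
    simp only
    rw [card_insert_of_notMem (hxS x)]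
    exact spSCard hq hq2 hn hqn hF hagF hx
  have hSmem : ∀ x, ∀ y, y ∈ S x ↔ (y ∈ F ∧ y ≠ x ∧ spAg x y = 0) := by
    intro x y
    rw [hSdef]
    simp only [mem_filter, Finset.mem_erase]
    tauto
  have hTpair : ∀ x ∈ F, ∀ y ∈ T x, ∀ z ∈ T x, y ≠ z → spAg y z = 0 := by
    intro x hx y hy z hz hyz
    rcases Finset.mem_insert.1 hy with rfl | hy'
    · rcases Finset.mem_insert.1 hz with rfl | hz'
      · exact absurd rfl hyz
      · exact ((hSmem y z).1 hz').2.2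
    · rcases Finset.mem_insert.1 hz with rfl | hz'
      · rw [spAg_comm]
        exact ((hSmem z y).1 hy').2.2
      · have h1 := (hSmem x y).1 hy'
        have h2 := (hSmem x z).1 hz'
        exact spSDisj hq hq2 hn hqn hF hagF hx h1.1 h2.1 h1.2.2 h2.2.2 hyz
  have hTT : ∀ x ∈ F, ∀ y ∈ T x, T y = T x := by
    have hsub : ∀ x ∈ F, ∀ y ∈ T x, T x ⊆ T y := by
      intro x hx y hy w hw
      by_cases hwy : w = y
      · subst hwy; exact hxT w
      · have hagyw : spAg y w = 0 := hTpair x hx y hy w hw (Ne.symm hwy)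
        exact Finset.mem_insert.2 (Or.inr ((hSmem y w).2
          ⟨hTsub x hx hw, hwy, hagyw⟩))
    intro x hx y hy
    have hyF : y ∈ F := hTsub x hx hy
    have hxTy : x ∈ T y := hsub x hx y hy (hxT x)
    exact Finset.Subset.antisymm (hsub y hyF x hxTy) (hsub x hx y hy)
  refine ⟨F.image T, ?_, ?_, ?_, ?_⟩
  · -- pairwise disjoint
    intro s hs t ht hst
    obtain ⟨x, hx, rfl⟩ := Finset.mem_image.1 hs
    obtain ⟨y, hy, rfl⟩ := Finset.mem_image.1 ht
    by_contra hnd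
    obtain ⟨w, hw1, hw2⟩ := Finset.not_disjoint_iff.1 hnd
    have hwF : w ∈ F := hTsub x hx hw1
    exact hst ((hTT x hx w hw1).symm.trans (hTT y hy w hw2))
  · -- union
    ext w
    simp only [Finset.mem_biUnion, Finset.mem_image, id]
    constructor
    · rintro ⟨s, ⟨x, hx, rfl⟩, hw⟩
      exact hTsub x hx hw
    · intro hw
      exact ⟨T w, ⟨w, hw, rfl⟩, hxT w⟩
  · -- cardinality of the partition
    have hdisj : ∀ s ∈ F.image T, ∀ t ∈ F.image T, s ≠ t → Disjoint (id s) (id t) := by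
      intro s hs t ht hst
      obtain ⟨x, hx, rfl⟩ := Finset.mem_image.1 hs
      obtain ⟨y, hy, rfl⟩ := Finset.mem_image.1 ht
      by_contra hnd
      obtain ⟨w, hw1, hw2⟩ := Finset.not_disjoint_iff.1 hnd
      exact hst ((hTT x hx w hw1).symm.trans (hTT y hy w hw2))
    have hcb := Finset.card_biUnion hdisj
    have hbiu : (F.image T).biUnion id = F := by
      ext w
      simp only [Finset.mem_biUnion, Finset.mem_image, id]
      constructor
      · rintro ⟨s, ⟨x, hx, rfl⟩, hw⟩
        exact hTsub x hx hw
      · intro hw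
        exact ⟨T w, ⟨w, hw, rfl⟩, hxT w⟩
    rw [hbiu, hF] at hcb
    have hconst : ∑ s ∈ F.image T, #(id s) = #(F.image T) * q := by
      refine Finset.sum_const_nat fun s hs => ?_
      obtain ⟨x, hx, rfl⟩ := Finset.mem_image.1 hs
      exact hTcard x hx
    rw [hconst] at hcb
    exact Nat.eq_of_mul_eq_mul_right hq0 (by rw [← hcb, Nat.mul_comm])
  · -- each part is a simplex
    intro s hs
    obtain ⟨x, hx, rfl⟩ := Finset.mem_image.1 hs
    exact ⟨hTcard x hx, fun y hy z hz hyz => hTpair x hx y hy z hz hyz⟩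

end SP5

/-- A `q`-ary code of length `n`, cardinality `qn` and minimum distance
`(q-1)n/q` can be partitioned into `n` pairwise disjoint simplex subcodes,
i.e. subsets of `q` codewords any two of which are at Hamming distance
exactly `n`. -/
theorem partition_into_simplexes
    {A : Type*} [Fintype A] [DecidableEq A] {q n : ℕ}
    (hq : Fintype.card A = q) (hq2 : 2 ≤ q)
    (C : Set (Fin n → A))
    (hcardC : Nat.card C = q * n)
    (hdist : ∀ x ∈ C, ∀ y ∈ C, x ≠ y → (q - 1) * n ≤ q * hammingDist x y) :
    ∃ parts : Fin n → Set (Fin n → A),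
      (∀ i j : Fin n, i ≠ j → Disjoint (parts i) (parts j)) ∧
      (⋃ i, parts i) = C ∧
      ∀ i : Fin n, Nat.card (parts i) = q ∧
        ∀ x ∈ parts i, ∀ y ∈ parts i, x ≠ y → hammingDist x y = n := by
  classical
  have hCfin : C.Finite := Set.toFinite C
  -- case n = 0
  rcases Nat.eq_zero_or_pos n with hn0 | hn1
  · subst hn0
    have hC0 : C = ∅ := by
      have h1 : C.ncard = 0 := by
        rw [← Nat.card_coe_set_eq, hcardC, Nat.mul_zero]
      exact (Set.ncard_eq_zero hCfin).1 h1
    refine ⟨fun i => i.elim0, fun i => i.elim0, ?_, fun i => i.elim0⟩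
    rw [hC0, Set.iUnion_of_empty]
  -- pass to a Finset
  set F : Finset (Fin n → A) := hCfin.toFinset with hFdef
  have hFC : (F : Set (Fin n → A)) = C := hCfin.coe_toFinset
  have hFmem : ∀ x, x ∈ F ↔ x ∈ C := fun x => hCfin.mem_toFinset
  have hF : #F = q * n := by
    rw [← hcardC, Nat.card_coe_set_eq, Set.ncard_eq_toFinset_card C hCfin]
  have hagF : ∀ x ∈ F, ∀ y ∈ F, x ≠ y → q * spAg x y ≤ n := by
    intro x hx y hy hxy
    have h1 := hdist x ((hFmem x).1 hx) y ((hFmem y).1 hy) hxy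
    have h2 : q * (hammingDist x y + spAg x y) = q * n := by
      rw [spDist_add_ag]
    rw [Nat.mul_add] at h2
    have h3 : n + (q - 1) * n = q * n := by
      rcases q with _ | q'
      · omega
      · simp only [Nat.add_sub_cancel]; ring
    omega
  -- case n = 1 : the whole code is a simplex
  rcases eq_or_lt_of_le (show 1 ≤ n from hn1) with hn1' | hn2
  · have hn1'' : n = 1 := hn1'.symm
    subst hn1''
    refine ⟨fun _ => C, ?_, ?_, ?_⟩
    · intro i j hij
      exact absurd (Subsingleton.elim i j) hij
    · exact Set.iUnion_const C
    · intro i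
      refine ⟨by rw [hcardC, Nat.mul_one], ?_⟩
      intro x hx y hy hxy
      have h1 : hammingDist x y ≤ 1 := by
        have := hammingDist_le_card_fintype (x := x) (y := y)
        simpa using this
      have h2 : hammingDist x y ≠ 0 := fun h => hxy (hammingDist_eq_zero.1 h)
      omega
  -- case q ∤ n : contradiction
  by_cases hqn : q ∣ n
  swap
  · exact absurd (spNotDvd hq hq2 hn2 hqn hF hagF) (fun h => h)
  -- main case
  obtain ⟨P, hPdisj, hPunion, hPcard, hPparts⟩ := spMain hq hq2 hn1 hqn hF hagF
  have e : ↥P ≃ Fin n := Finset.equivFinOfCardEq hPcard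
  refine ⟨fun i => ((e.symm i : ↥P) : Finset (Fin n → A)), ?_, ?_, ?_⟩
  · intro i j hij
    have hne : ((e.symm i : ↥P) : Finset (Fin n → A)) ≠ ((e.symm j : ↥P) : Finset (Fin n → A)) := by
      intro h
      exact hij (by
        have : (e.symm i : ↥P) = (e.symm j : ↥P) := Subtype.ext h
        have := congrArg e this
        simpa using this)
    have hd := hPdisj _ (e.symm i).2 _ (e.symm j).2 hne
    exact Finset.disjoint_coe.2 hd
  · rw [← hFC]
    ext w
    simp only [Set.mem_iUnion, Finset.mem_coe]
    constructor
    · rintro ⟨i, hi⟩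
      have : w ∈ P.biUnion id := Finset.mem_biUnion.2 ⟨_, (e.symm i).2, hi⟩
      rwa [hPunion] at this
    · intro hw
      rw [← hPunion] at hw
      obtain ⟨s, hs, hws⟩ := Finset.mem_biUnion.1 hw
      refine ⟨e ⟨s, hs⟩, ?_⟩
      rw [Equiv.symm_apply_apply]
      exact hws
  · intro i
    obtain ⟨hcard, hpair⟩ := hPparts _ (e.symm i).2
    constructor
    · rw [Nat.card_coe_set_eq, Set.ncard_coe_finset]
      exact hcard
    · intro x hx y hy hxy
      have h0 := hpair x hx y hy hxy
      have := spDist_add_ag x y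
      omega
end

section
/- Let A be a finite alphabet with |A| = q ≥ 2 and let C ⊆ A^n be a distance-invariant simplex two-weight (n,N,{d,n})_q-code (pairwise distances in {d,n} with d < n, both attained; C contains q codewords pairwise at distance n; C is distance invariant). Then q·d ≤ (q−1)·n. -/
private lemma simplex_aux {q n d k m : ℕ} (_hdn : d ≤ n) (hk : 1 ≤ k)
    (hkm : k + m = q) (heq : k * d + m * n = n * (q - 1)) :
    q * d ≤ (q - 1) * n := by
  obtain ⟨k', rfl⟩ : ∃ k', k = k' + 1 := ⟨k - 1, by omega⟩
  subst hkm
  have h2 : k' + 1 + m - 1 = k' + m := by omega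
  rw [h2] at heq ⊢
  have h1 : (k' + 1) * d = k' * n := by nlinarith
  have hmul : (k' + 1) * ((k' + 1 + m) * d) ≤ (k' + 1) * ((k' + m) * n) := by
    calc (k' + 1) * ((k' + 1 + m) * d) = (k' + 1 + m) * ((k' + 1) * d) := by ring
      _ = (k' + 1 + m) * (k' * n) := by rw [h1]
      _ ≤ (k' + 1) * ((k' + m) * n) := by nlinarith
  exact Nat.le_of_mul_le_mul_left hmul (Nat.succ_pos k')

/-- In a distance-invariant simplex two-weight `(n, N, {d, n})_q`-code, the
smaller distance satisfies the Plotkin-type inequality `q·d ≤ (q-1)·n`. -/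
theorem simplex_code_distance_bound
    {A : Type*} [Fintype A] [DecidableEq A] {q n d : ℕ}
    (hq : Fintype.card A = q) (hq2 : 2 ≤ q)
    (C : Set (Fin n → A))
    (hdist : ∀ x ∈ C, ∀ y ∈ C, x ≠ y →
      hammingDist x y = d ∨ hammingDist x y = n)
    (hdn : d < n)
    (hd_att : ∃ x ∈ C, ∃ y ∈ C, x ≠ y ∧ hammingDist x y = d)
    (hn_att : ∃ x ∈ C, ∃ y ∈ C, x ≠ y ∧ hammingDist x y = n)
    (hsimplex : ∃ S ⊆ C, Nat.card S = q ∧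
      ∀ x ∈ S, ∀ y ∈ S, x ≠ y → hammingDist x y = n)
    (hinv : ∀ c ∈ C, ∀ c' ∈ C, ∀ i : ℕ,
      Nat.card {x : Fin n → A | x ∈ C ∧ hammingDist c x = i} =
        Nat.card {x : Fin n → A | x ∈ C ∧ hammingDist c' x = i}) :
    q * d ≤ (q - 1) * n := by
  classical
  obtain ⟨S, hSC, hScard, hSdist⟩ := hsimplex
  have hSfin : S.Finite := Set.toFinite S
  set T := hSfin.toFinset with hT
  have hTcard : T.card = q := by
    rw [hT, Set.Finite.card_toFinset]
    simpa [Nat.card_eq_fintype_card] using hScard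
  -- d ≥ 1
  obtain ⟨c₀, hc₀, y₀, hy₀, hne₀, hd₀⟩ := hd_att
  have hd1 : 1 ≤ d := hd₀ ▸ hammingDist_pos.2 hne₀
  -- pick s₁ ∈ S
  have hTne : T.Nonempty := by rw [← Finset.card_pos, hTcard]; omega
  obtain ⟨s₁, hs₁T⟩ := hTne
  have hs₁S : s₁ ∈ S := (hSfin.mem_toFinset).1 hs₁T
  have hs₁C : s₁ ∈ C := hSC hs₁S
  -- invariance gives x with dist s₁ x = d
  have hpos : 0 < Nat.card {x : Fin n → A | x ∈ C ∧ hammingDist c₀ x = d} := by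
    have : Nonempty {x : Fin n → A | x ∈ C ∧ hammingDist c₀ x = d} := ⟨⟨y₀, hy₀, hd₀⟩⟩
    exact Nat.card_pos
  rw [hinv c₀ hc₀ s₁ hs₁C d] at hpos
  obtain ⟨⟨x, hxC, hxd⟩, -⟩ := Nat.card_pos_iff.1 hpos
  -- x ∉ S
  have hxS : x ∉ S := by
    intro hxS
    by_cases hx : x = s₁
    · subst hx; simp [hammingDist_self] at hxd; omega
    · have := hSdist s₁ hs₁S x hxS (fun h => hx h.symm)
      omega
  -- each s ∈ T differs from x everywhere or in d places
  have hkey : ∀ s ∈ T, hammingDist x s = d ∨ hammingDist x s = n := by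
    intro s hsT
    have hsS : s ∈ S := (hSfin.mem_toFinset).1 hsT
    exact hdist x hxC s (hSC hsS) (fun h => hxS (h ▸ hsS))
  -- coordinate injectivity on T
  have hinj : ∀ j : Fin n, Set.InjOn (fun s : Fin n → A => s j) ↑T := by
    intro j s hsT t htT hst
    by_contra hne
    have hsS : s ∈ S := (hSfin.mem_toFinset).1 hsT
    have htS : t ∈ S := (hSfin.mem_toFinset).1 htT
    have hdn' : hammingDist s t = n := hSdist s hsS t htS hne
    have : ({i | s i ≠ t i} : Finset (Fin n)) = Finset.univ := by
      apply Finset.eq_of_subset_of_card_le (Finset.subset_univ _)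
      simp [hammingDist] at hdn'
      simp [hdn']
    have hj : s j ≠ t j := by
      have := Finset.mem_filter.1 (this ▸ Finset.mem_univ j)
      exact this.2
    exact hj hst
  have himg : ∀ j : Fin n, T.image (fun s => s j) = Finset.univ := by
    intro j
    apply Finset.eq_univ_of_card
    rw [Finset.card_image_of_injOn (hinj j), hTcard, hq]
  have hfil : ∀ j : Fin n, (T.filter fun s => ¬ x j ≠ s j).card = 1 := by
    intro j
    have : x j ∈ T.image (fun s => s j) := (himg j) ▸ Finset.mem_univ _
    obtain ⟨s, hsT, hsj⟩ := Finset.mem_image.1 this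
    rw [Finset.card_eq_one]
    refine ⟨s, ?_⟩
    ext t
    simp only [Finset.mem_filter, Finset.mem_singleton, not_not]
    constructor
    · rintro ⟨htT, htj⟩
      exact hinj j htT hsT (htj.symm.trans hsj.symm)
    · rintro rfl; exact ⟨hsT, hsj.symm⟩
  -- the grand sum
  have hsum : ∑ s ∈ T, hammingDist x s = n * (q - 1) := by
    have step : ∀ s, hammingDist x s = ∑ j : Fin n, if x j ≠ s j then 1 else 0 := by
      intro s; rw [hammingDist, Finset.card_filter]
    calc ∑ s ∈ T, hammingDist x s
        = ∑ s ∈ T, ∑ j : Fin n, if x j ≠ s j then 1 else 0 := by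
          exact Finset.sum_congr rfl fun s _ => step s
      _ = ∑ j : Fin n, ∑ s ∈ T, if x j ≠ s j then 1 else 0 := Finset.sum_comm
      _ = ∑ j : Fin n, (q - 1) := by
          refine Finset.sum_congr rfl fun j _ => ?_
          have h1 : (∑ s ∈ T, if x j ≠ s j then 1 else 0)
              = (T.filter fun s => x j ≠ s j).card := by
            rw [Finset.card_filter]
          rw [h1]
          have h2 : (T.filter fun s => ¬ (x j ≠ s j)).card = 1 := hfil j
          have h3 : (T.filter fun s => x j ≠ s j).card
              + (T.filter fun s => ¬ x j ≠ s j).card = T.card :=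
            Finset.card_filter_add_card_filter_not _
          rw [h2, hTcard] at h3
          exact Nat.eq_sub_of_add_eq h3
      _ = n * (q - 1) := by simp [Finset.sum_const, Finset.card_univ]
  -- partition by distance
  set T1 := T.filter (fun s => hammingDist x s = d) with hT1
  set T2 := T.filter (fun s => ¬ hammingDist x s = d) with hT2
  have hk1 : 1 ≤ T1.card := by
    refine Finset.card_pos.2 ⟨s₁, ?_⟩
    rw [hT1, Finset.mem_filter]
    exact ⟨hs₁T, by rw [hammingDist_comm]; exact hxd⟩
  have hsplit : T1.card + T2.card = q := by
    rw [hT1, hT2, Finset.card_filter_add_card_filter_not, hTcard]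
  have hsum2 : ∑ s ∈ T, hammingDist x s = T1.card * d + T2.card * n := by
    rw [← Finset.sum_filter_add_sum_filter_not T (fun s => hammingDist x s = d)]
    congr 1
    · rw [Finset.sum_congr rfl (fun s hs => (Finset.mem_filter.1 hs).2),
        Finset.sum_const, smul_eq_mul]
    · rw [Finset.sum_congr rfl (fun s hs => ?_), Finset.sum_const, smul_eq_mul]
      have hs' := Finset.mem_filter.1 hs
      rcases hkey s hs'.1 with h | h
      · exact absurd h hs'.2
      · exact h
  -- arithmetic
  exact simplex_aux hdn.le hk1 hsplit (hsum2.symm.trans hsum)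
end

section
/- Let F be a finite field with q elements and let C be a linear code in F^n whose nonzero codewords all have Hamming weight d or n (with d < n, both values attained), and suppose the all-one vector 1 = (1,1,…,1) belongs to C. Then for every codeword v ∈ C that is not a scalar multiple of the all-one vector, every symbol α ∈ F that occurs in some coordinate of v occurs in v exactly n − d times. -/
/-- Let `C` be a linear two-weight `[n, k, {d, n}]_q`-code containing the
all-one vector.  Then in every codeword `v` that is not a scalar multiple of
the all-one vector, every symbol `α` occurring in `v` occurs exactly `n - d`
times. -/
theorem two_weight_symbol_multiplicity
    {F : Type*} [Field F] [Fintype F] [DecidableEq F] {q n d : ℕ}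
    (hq : Fintype.card F = q)
    (C : Submodule F (Fin n → F))
    (hweights : ∀ x ∈ C, x ≠ 0 → hammingNorm x = d ∨ hammingNorm x = n)
    (hd_att : ∃ x ∈ C, x ≠ 0 ∧ hammingNorm x = d)
    (hn_att : ∃ x ∈ C, x ≠ 0 ∧ hammingNorm x = n)
    (hdn : d < n)
    (hone : (fun _ : Fin n => (1 : F)) ∈ C) :
    ∀ v ∈ C, (∀ l : F, v ≠ fun _ : Fin n => l) →
      ∀ α : F, (∃ i : Fin n, v i = α) →
        Nat.card {i : Fin n | v i = α} = n - d := by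
  intro v hv hvconst α hα
  obtain ⟨i0, hi0⟩ := hα
  set w : Fin n → F := v - α • (fun _ : Fin n => (1 : F)) with hwdef
  have hw : w ∈ C := C.sub_mem hv (C.smul_mem α hone)
  have hwne : w ≠ 0 := by
    intro h
    apply hvconst α
    funext j
    have := congrFun h j
    simp only [hwdef, Pi.sub_apply, Pi.smul_apply, smul_eq_mul, mul_one,
      Pi.zero_apply, sub_eq_zero] at this
    exact this
  have hweq : ∀ i, w i = 0 ↔ v i = α := by
    intro i
    simp [hwdef, sub_eq_zero]
  have hwi0 : w i0 = 0 := (hweq i0).2 hi0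
  have hnorm : hammingNorm w = (Finset.univ.filter fun i => w i ≠ 0).card := rfl
  have hlt : hammingNorm w < n := by
    have hsub : (Finset.univ.filter fun i => w i ≠ 0) ⊆ Finset.univ.erase i0 := by
      intro i hi
      simp only [Finset.mem_filter, Finset.mem_univ, true_and] at hi
      refine Finset.mem_erase.2 ⟨?_, Finset.mem_univ i⟩
      intro h; exact hi (h ▸ hwi0)
    calc hammingNorm w ≤ (Finset.univ.erase i0).card := Finset.card_le_card hsub
      _ < Finset.univ.card := Finset.card_erase_lt_of_mem (Finset.mem_univ i0)
      _ = n := by simp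
  have hwd : hammingNorm w = d := by
    rcases hweights w hw hwne with h | h
    · exact h
    · omega
  have hcard : Nat.card {i : Fin n | v i = α} = (Finset.univ.filter fun i => v i = α).card := by
    rw [Nat.card_eq_card_toFinset]
    congr 1
    ext i
    simp
  rw [hcard]
  have hsplit : (Finset.univ.filter fun i => v i = α).card
      + (Finset.univ.filter fun i => ¬ v i = α).card = n := by
    rw [Finset.card_filter_add_card_filter_not]
    simp
  have : (Finset.univ.filter fun i => ¬ v i = α).card = d := by
    rw [← hwd, hnorm]
    congr 1
    ext i
    simp [hweq i]
  omega
end
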